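/- arXiv:2308.05519 — 6 statements merged into one kernel-verified Lean document; each statement's English description precedes it below -/
import Mathlib

section
/- Let N be a positive integer and a ≥ 0. Then Σ_{k=0}^{N-1} P(k+1, N a²) = N a² + N (1 - a²) · P(N, N a²) - (N a²)^N e^{-N a²} / (N-1)!. (This is the expected number of eigenvalues of the complex Ginibre ensemble in the centred disc of radius a.) -/
open MeasureTheory Real Filter

/-- The lower incomplete gamma function `γ(n,x) = ∫₀^x t^(n-1) e^(-t) dt`. -/
noncomputable def lowGamma (n x : ℝ) : ℝ := ∫ t in (0:ℝ)..x, t ^ (n - 1) * Real.exp (-t)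

/-- The regularized lower incomplete gamma function `P(n,x) = γ(n,x)/Γ(n)`. -/
noncomputable def regP (n x : ℝ) : ℝ := (Real.Gamma n)⁻¹ * lowGamma n x


lemma exp_int (k : ℕ) (x : ℝ) :
    ∫ t in (0:ℝ)..x, t ^ k * Real.exp (-t)
      = k.factorial * (1 - Real.exp (-x) * ∑ j ∈ Finset.range (k+1), x ^ j / j.factorial) := by
  have hv : ∀ t ∈ Set.uIcc (0:ℝ) x, HasDerivAt (fun t => -Real.exp (-t)) (Real.exp (-t)) t := by
    intro t _
    have h := ((Real.hasDerivAt_exp (-t)).comp t (hasDerivAt_neg t)).neg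
    simp only [mul_neg, mul_one, neg_neg] at h
    exact h
  induction k with
  | zero =>
      simp only [pow_zero, one_mul, Nat.factorial_zero, Nat.cast_one, Finset.range_one,
        Finset.sum_singleton, pow_zero, Nat.factorial_zero]
      rw [intervalIntegral.integral_eq_sub_of_hasDerivAt hv
        ((Real.continuous_exp.comp continuous_neg).intervalIntegrable 0 x)]
      simp
      ring
  | succ k ih =>
      have hu : ∀ t ∈ Set.uIcc (0:ℝ) x, HasDerivAt (fun t => t ^ (k+1)) ((↑(k+1)) * t ^ k) t := by
        intro t _; simpa using hasDerivAt_pow (k+1) t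
      have key := intervalIntegral.integral_mul_deriv_eq_deriv_mul hu hv
        (by apply Continuous.intervalIntegrable; continuity)
        (by apply Continuous.intervalIntegrable; continuity)
      rw [key]
      have : ∫ t in (0:ℝ)..x, (↑(k+1)) * t ^ k * -Real.exp (-t)
          = -((k+1:ℕ):ℝ) * ∫ t in (0:ℝ)..x, t ^ k * Real.exp (-t) := by
        rw [← intervalIntegral.integral_const_mul]
        congr 1; ext t; ring
      rw [this, ih]
      rw [Finset.sum_range_succ (f := fun j => x ^ j / (j.factorial : ℝ)) (k+1)]
      have hfac : ((k+1).factorial : ℝ) ≠ 0 := Nat.cast_ne_zero.2 (Nat.factorial_ne_zero _)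
      rw [Nat.factorial_succ]
      push_cast
      field_simp
      ring

lemma regP_closed (k : ℕ) (x : ℝ) :
    regP (k + 1) x = 1 - Real.exp (-x) * ∑ j ∈ Finset.range (k+1), x ^ j / j.factorial := by
  have h1 : lowGamma (k + 1) x = ∫ t in (0:ℝ)..x, t ^ k * Real.exp (-t) := by
    unfold lowGamma
    congr 1
    ext t
    rw [show ((k:ℝ) + 1) - 1 = (k:ℝ) by ring, Real.rpow_natCast]
  rw [regP, h1, exp_int, Real.Gamma_nat_eq_factorial]
  have hfac : ((k.factorial : ℝ)) ≠ 0 := Nat.cast_ne_zero.2 (Nat.factorial_ne_zero _)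
  field_simp

lemma double_sum (N : ℕ) (f : ℕ → ℝ) :
    ∑ k ∈ Finset.range N, ∑ j ∈ Finset.range (k+1), f j
      = ∑ j ∈ Finset.range N, ((N:ℝ) - j) * f j := by
  induction N with
  | zero => simp
  | succ N ih =>
      rw [Finset.sum_range_succ, ih, Finset.sum_range_succ (f := fun j => (((N+1:ℕ):ℝ) - j) * f j)]
      push_cast
      rw [show ((N:ℝ) + 1 - N) * f N = f N by ring]
      rw [show (∑ j ∈ Finset.range N, ((N:ℝ) + 1 - ↑j) * f j)
        = (∑ j ∈ Finset.range N, ((N:ℝ) - ↑j) * f j) + ∑ j ∈ Finset.range N, f j by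
          rw [← Finset.sum_add_distrib]; apply Finset.sum_congr rfl; intro j _; ring]
      rw [Finset.sum_range_succ]
      ring

lemma x_sum (N : ℕ) (hN : 0 < N) (x : ℝ) :
    x * ∑ j ∈ Finset.range N, x ^ j / j.factorial
      = (∑ j ∈ Finset.range N, (j:ℝ) * (x ^ j / j.factorial)) + x ^ N / (N-1).factorial := by
  induction N with
  | zero => omega
  | succ N ih =>
      rcases Nat.eq_zero_or_pos N with h0 | hpos
      · subst h0; simp
      · rw [Finset.sum_range_succ, mul_add, ih hpos,
          Finset.sum_range_succ (f := fun j => (j:ℝ) * (x ^ j / j.factorial))]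
        have h1 : ((N:ℝ)) * (x ^ N / N.factorial) = x ^ N / (N-1).factorial := by
          have : (N.factorial : ℝ) = N * (N-1).factorial := by
            rw [← Nat.mul_factorial_pred hpos.ne']; push_cast; ring
          rw [this]
          have hf : ((N-1).factorial : ℝ) ≠ 0 := Nat.cast_ne_zero.2 (Nat.factorial_ne_zero _)
          have hn : (N:ℝ) ≠ 0 := Nat.cast_ne_zero.2 hpos.ne'
          field_simp
        rw [show Nat.succ N - 1 = N from rfl]
        rw [h1]
        ring

theorem expected_number_GinUE (N : ℕ) (hN : 0 < N) (a : ℝ) (ha : 0 ≤ a) :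
    ∑ k ∈ Finset.range N, regP (k + 1) (N * a ^ 2)
      = N * a ^ 2 + N * (1 - a ^ 2) * regP N (N * a ^ 2)
        - (N * a ^ 2) ^ N * Real.exp (-(N * a ^ 2)) / Nat.factorial (N - 1) := by
  set x : ℝ := N * a ^ 2 with hx
  set S : ℝ := ∑ j ∈ Finset.range N, x ^ j / j.factorial with hS
  have hc : ((N - 1 : ℕ) : ℝ) + 1 = (N : ℝ) := by
    have : (N - 1) + 1 = N := Nat.succ_pred_eq_of_pos hN
    exact_mod_cast congrArg (Nat.cast : ℕ → ℝ) this
  have hP : regP N x = 1 - Real.exp (-x) * S := by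
    have h := regP_closed (N-1) x
    rw [hc, Nat.sub_add_cancel hN] at h
    exact h
  have hL : ∑ k ∈ Finset.range N, regP (k + 1) x
      = (N : ℝ) - Real.exp (-x) * ∑ j ∈ Finset.range N, ((N:ℝ) - j) * (x ^ j / j.factorial) := by
    rw [← double_sum N (fun j => x ^ j / j.factorial)]
    rw [Finset.sum_congr rfl (fun k _ => regP_closed k x)]
    rw [Finset.sum_sub_distrib, Finset.sum_const, Finset.card_range, ← Finset.mul_sum]
    simp [mul_comm]
  have hsum : ∑ j ∈ Finset.range N, ((N:ℝ) - j) * (x ^ j / j.factorial)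
      = (N:ℝ) * S - (x * S - x ^ N / (N-1).factorial) := by
    have h2 : ∑ j ∈ Finset.range N, ((N:ℝ) - j) * (x ^ j / j.factorial)
        = (N:ℝ) * S - ∑ j ∈ Finset.range N, (j:ℝ) * (x ^ j / j.factorial) := by
      rw [hS, Finset.mul_sum, ← Finset.sum_sub_distrib]
      apply Finset.sum_congr rfl; intro j _; ring
    rw [h2]
    have h3 := x_sum N hN x
    linarith
  rw [hL, hsum, hP]
  push_cast
  ring
end

section
/- Let N be a positive integer and a ≥ 0. Then Σ_{k=0}^{N-1} P(2k+2, 2N a²) = (1/2) Σ_{k=0}^{2N-1} P(k+1, 2N a²) - (e^{-2N a²}/2) · ( sinh(2N a²) - ((2N a²)^{2N+1}/(2N+1)!) · ₁F₂(1; N+1, N+3/2; N² a⁴) ). (This is the expected number of eigenvalues of the symplectic Ginibre ensemble in the centred disc of radius a.) -/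
open MeasureTheory Real Filter

/-- The Pochhammer symbol `(x)_k = x (x+1) ⋯ (x+k-1)`. -/
noncomputable def poch (x : ℝ) (k : ℕ) : ℝ := ∏ i ∈ Finset.range k, (x + i)

/-- The generalized hypergeometric function `₁F₂(a; b, c; z)`. -/
noncomputable def hyp1F2 (a b c z : ℝ) : ℝ :=
  ∑' k : ℕ, poch a k / (poch b k * poch c k) * z ^ k / Nat.factorial k

/-- Partial sums of the exponential series. -/
noncomputable def pExp (m : ℕ) (x : ℝ) : ℝ := ∑ j ∈ Finset.range m, x ^ j / Nat.factorial j

lemma pExp_succ (m : ℕ) (x : ℝ) : pExp (m + 1) x = pExp m x + x ^ m / Nat.factorial m := by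
  simp [pExp, Finset.sum_range_succ]

lemma hasDerivAt_pExp (m : ℕ) (t : ℝ) : HasDerivAt (fun y => pExp (m + 1) y) (pExp m t) t := by
  induction m with
  | zero =>
    simp only [pExp, Finset.sum_range_one, Finset.sum_range_zero]
    simpa using hasDerivAt_const t (1 : ℝ)
  | succ m ih =>
    have h1 : HasDerivAt (fun y : ℝ => y ^ (m + 1) / Nat.factorial (m + 1))
        (t ^ m / Nat.factorial m) t := by
      have := (hasDerivAt_pow (m + 1) t).div_const (Nat.factorial (m + 1) : ℝ)
      refine this.congr_deriv ?_
      have hm : (Nat.factorial (m + 1) : ℝ) = (m + 1) * Nat.factorial m := by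
        push_cast [Nat.factorial_succ]; ring
      rw [hm]
      have : (Nat.factorial m : ℝ) ≠ 0 := Nat.cast_ne_zero.2 (Nat.factorial_ne_zero m)
      field_simp
      push_cast [Nat.add_sub_cancel]
      ring
    rw [pExp_succ m t]
    simp only [show ∀ y : ℝ, pExp (m + 1 + 1) y = pExp (m + 1) y + y ^ (m+1) / Nat.factorial (m+1)
      from fun y => pExp_succ (m + 1) y]
    exact ih.add h1

lemma pExp_zero (m : ℕ) : pExp (m + 1) 0 = 1 := by
  induction m with
  | zero => simp [pExp]
  | succ m ih => rw [pExp_succ, ih]; simp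

lemma lowGamma_nat (m : ℕ) (x : ℝ) :
    lowGamma (m + 1) x = Nat.factorial m * (1 - Real.exp (-x) * pExp (m + 1) x) := by
  have hF : ∀ t : ℝ, HasDerivAt (fun y => (Nat.factorial m : ℝ) * (1 - Real.exp (-y) * pExp (m + 1) y))
      (t ^ m * Real.exp (-t)) t := by
    intro t
    have he : HasDerivAt (fun y : ℝ => Real.exp (-y)) (-Real.exp (-t)) t := by
      have h := (Real.hasDerivAt_exp (-t)).comp t (hasDerivAt_neg t)
      simp at h
      exact h
    have hp := hasDerivAt_pExp m t
    have := ((he.mul hp).const_mul (-(Nat.factorial m : ℝ)))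
    have h2 := this.const_add (Nat.factorial m : ℝ)
    refine HasDerivAt.congr_deriv (h2.congr_of_eventuallyEq (Filter.Eventually.of_forall fun y => ?_)) ?_
    · simp only [Pi.mul_apply]; ring
    · have hfac : (Nat.factorial m : ℝ) ≠ 0 := Nat.cast_ne_zero.2 (Nat.factorial_ne_zero m)
      rw [pExp_succ m t]
      field_simp
      ring
  have hcont : IntervalIntegrable (fun t : ℝ => t ^ m * Real.exp (-t)) volume 0 x := by
    apply Continuous.intervalIntegrable
    exact (continuous_pow m).mul (Real.continuous_exp.comp continuous_neg)
  have := intervalIntegral.integral_eq_sub_of_hasDerivAt (fun t _ => hF t) hcont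
  have hrw : lowGamma (m + 1) x = ∫ t in (0:ℝ)..x, t ^ m * Real.exp (-t) := by
    unfold lowGamma
    congr 1
    funext t
    have : ((m : ℝ) + 1) - 1 = (m : ℝ) := by ring
    rw [this, Real.rpow_natCast]
  rw [hrw, this, pExp_zero]
  simp

lemma regP_nat (m : ℕ) (x : ℝ) : regP (m + 1) x = 1 - Real.exp (-x) * pExp (m + 1) x := by
  unfold regP
  rw [lowGamma_nat]
  have : Real.Gamma ((m : ℝ) + 1) = Nat.factorial m := by
    exact_mod_cast Real.Gamma_nat_eq_factorial m
  rw [this]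
  have hfac : (Nat.factorial m : ℝ) ≠ 0 := Nat.cast_ne_zero.2 (Nat.factorial_ne_zero m)
  field_simp

lemma alt_sum (N : ℕ) (x : ℝ) :
    2 * ∑ k ∈ Finset.range N, pExp (2 * k + 2) x - ∑ k ∈ Finset.range (2 * N), pExp (k + 1) x
      = ∑ k ∈ Finset.range N, x ^ (2 * k + 1) / Nat.factorial (2 * k + 1) := by
  induction N with
  | zero => simp
  | succ N ih =>
    rw [Finset.sum_range_succ, Finset.sum_range_succ,
      show 2 * (N + 1) = 2 * N + 1 + 1 from by ring, Finset.sum_range_succ,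
      Finset.sum_range_succ, show 2 * N + 1 + 1 = 2 * N + 2 from by ring,
      pExp_succ (2 * N + 1) x]
    linarith [ih]

lemma summable_odd (x : ℝ) : Summable (fun k : ℕ => x ^ (2 * k + 1) / Nat.factorial (2 * k + 1)) := by
  have h := (Real.summable_pow_div_factorial x).comp_injective
    (show Function.Injective (fun k : ℕ => 2 * k + 1) from fun a b hab => by simp at hab; omega)
  exact h

lemma sinh_tsum (x : ℝ) :
    Real.sinh x = ∑' k : ℕ, x ^ (2 * k + 1) / Nat.factorial (2 * k + 1) := by
  have hexp : ∀ y : ℝ, Real.exp y = ∑' n : ℕ, y ^ n / Nat.factorial n := by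
    intro y
    rw [Real.exp_eq_exp_ℝ, NormedSpace.exp_eq_tsum_div]
  have hs1 := Real.summable_pow_div_factorial x
  have hs2 := Real.summable_pow_div_factorial (-x)
  have hsub : Real.exp x - Real.exp (-x)
      = ∑' n : ℕ, (x ^ n / Nat.factorial n - (-x) ^ n / Nat.factorial n) := by
    rw [hexp, hexp, ← Summable.tsum_sub hs1 hs2]
  have heven : (fun k : ℕ => x ^ (2 * k) / Nat.factorial (2 * k) - (-x) ^ (2 * k) / Nat.factorial (2 * k)) = fun _ => (0:ℝ) := by
    funext k
    rw [Even.neg_pow ⟨k, by ring⟩]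
    ring
  have hodd : (fun k : ℕ => x ^ (2 * k + 1) / Nat.factorial (2 * k + 1) - (-x) ^ (2 * k + 1) / Nat.factorial (2 * k + 1))
      = fun k : ℕ => 2 * (x ^ (2 * k + 1) / Nat.factorial (2 * k + 1)) := by
    funext k
    rw [Odd.neg_pow ⟨k, by ring⟩]
    ring
  have hkey := tsum_even_add_odd (f := fun n : ℕ => x ^ n / Nat.factorial n - (-x) ^ n / Nat.factorial n)
    (by rw [heven]; exact summable_zero)
    (by rw [hodd]; exact (summable_odd x).mul_left 2)
  rw [heven, hodd, tsum_zero, zero_add, tsum_mul_left] at hkey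
  rw [Real.sinh_eq, hsub, ← hkey]
  ring

lemma poch_succ (x : ℝ) (k : ℕ) : poch x (k + 1) = poch x k * (x + k) :=
  Finset.prod_range_succ _ _

lemma poch_one (k : ℕ) : poch 1 k = Nat.factorial k := by
  induction k with
  | zero => simp [poch]
  | succ k ih =>
    rw [poch_succ, ih, Nat.factorial_succ]
    push_cast
    ring

lemma poch_pos {x : ℝ} (hx : 0 < x) (k : ℕ) : 0 < poch x k := by
  apply Finset.prod_pos
  intro i _
  positivity

lemma fact_key (N k : ℕ) :
    ((2 * N + 1 + 2 * k).factorial : ℝ)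
      = (2 * N + 1).factorial * 4 ^ k * poch (N + 1) k * poch (N + 3 / 2) k := by
  induction k with
  | zero => simp [poch]
  | succ k ih =>
    rw [show 2 * N + 1 + 2 * (k + 1) = (2 * N + 1 + 2 * k) + 1 + 1 from by ring,
      Nat.factorial_succ, Nat.factorial_succ, poch_succ, poch_succ]
    push_cast
    rw [ih]
    ring

lemma hyp_eq (N : ℕ) (x : ℝ) :
    x ^ (2 * N + 1) / ((2 * N + 1).factorial : ℝ) * hyp1F2 1 (N + 1) (N + 3 / 2) (x ^ 2 / 4)
      = ∑' k : ℕ, x ^ (2 * (k + N) + 1) / ((2 * (k + N) + 1).factorial : ℝ) := by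
  unfold hyp1F2
  rw [← tsum_mul_left]
  apply tsum_congr
  intro k
  rw [poch_one, show 2 * (k + N) + 1 = 2 * N + 1 + 2 * k from by ring, fact_key]
  have h1 : 0 < poch ((N:ℝ) + 1) k := poch_pos (by positivity) k
  have h2 : 0 < poch ((N:ℝ) + 3 / 2) k := poch_pos (by positivity) k
  have hf0 : ((2 * N + 1).factorial : ℝ) ≠ 0 := Nat.cast_ne_zero.2 (Nat.factorial_ne_zero _)
  have hk : (k.factorial : ℝ) ≠ 0 := Nat.cast_ne_zero.2 (Nat.factorial_ne_zero _)
  field_simp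
  ring_nf
  rw [mul_assoc, ← mul_pow]; norm_num

theorem expected_number_GinSE (N : ℕ) (hN : 0 < N) (a : ℝ) (ha : 0 ≤ a) :
    ∑ k ∈ Finset.range N, regP (2 * k + 2) (2 * N * a ^ 2)
      = (1 / 2) * ∑ k ∈ Finset.range (2 * N), regP (k + 1) (2 * N * a ^ 2)
        - (Real.exp (-(2 * N * a ^ 2)) / 2) *
          (Real.sinh (2 * N * a ^ 2)
            - (2 * N * a ^ 2) ^ (2 * N + 1) / Nat.factorial (2 * N + 1)
              * hyp1F2 1 (N + 1) (N + 3 / 2) (N ^ 2 * a ^ 4)) := by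
  set x : ℝ := 2 * N * a ^ 2 with hx
  have hr1 : ∀ k : ℕ, regP (2 * (k:ℝ) + 2) x = 1 - Real.exp (-x) * pExp (2 * k + 2) x := by
    intro k
    have h := regP_nat (2 * k + 1) x
    rw [show ((2 * k + 1 : ℕ) : ℝ) + 1 = 2 * (k:ℝ) + 2 from by push_cast; ring] at h
    rw [h, show 2 * k + 1 + 1 = 2 * k + 2 from by ring]
  have hr2 : ∀ k : ℕ, regP ((k:ℝ) + 1) x = 1 - Real.exp (-x) * pExp (k + 1) x :=
    fun k => regP_nat k x
  simp only [hr1, hr2, Finset.sum_sub_distrib, Finset.sum_const, Finset.card_range,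
    nsmul_eq_mul, mul_one, ← Finset.mul_sum]
  have h2 := alt_sum N x
  have hsplit := Summable.sum_add_tsum_nat_add N (summable_odd x)
  have hhyp : x ^ (2 * N + 1) / ((2 * N + 1).factorial : ℝ)
      * hyp1F2 1 (N + 1) (N + 3 / 2) ((N:ℝ) ^ 2 * a ^ 4)
      = ∑' k : ℕ, x ^ (2 * (k + N) + 1) / ((2 * (k + N) + 1).factorial : ℝ) := by
    rw [show (N:ℝ) ^ 2 * a ^ 4 = x ^ 2 / 4 from by rw [hx]; ring]
    exact hyp_eq N x
  have hfin : Real.sinh x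
      - x ^ (2 * N + 1) / ((2 * N + 1).factorial : ℝ)
        * hyp1F2 1 (N + 1) (N + 3 / 2) ((N:ℝ) ^ 2 * a ^ 4)
      = ∑ k ∈ Finset.range N, x ^ (2 * k + 1) / Nat.factorial (2 * k + 1) := by
    rw [hhyp, sinh_tsum x, ← hsplit]
    simp
  push_cast
  linear_combination (-(Real.exp (-x)) / 2) * h2 + (Real.exp (-x) / 2) * hfin
end

section
/- Let N ≥ 3 be an odd integer and a ≥ 0. Then ∫_{-a}^{a} [ √(N/(2π)) · Q(N-1, N x²) + (N^{N/2}/(2^{N/2} Γ(N/2))) · e^{-N x²/2} |x|^{N-1} · P((N-1)/2, N x²/2) ] dx = (1/√2) Σ_{k=0}^{N-2} ((2k-1)!!/(2k)!!) · P(k+1/2, N a²) + P(N/2, N a²/2) - (1/(2^{N/2} (N-2)!!)) Σ_{k=0}^{(N-3)/2} ((N+2k-2)!!/(2^k (2k)!!)) · P(N/2 + k, N a²). (The integrand is the density of real eigenvalues of the real Ginibre ensemble; the integral is the expected number of real eigenvalues in (-a,a).) -/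
open MeasureTheory Real Filter intervalIntegral
open scoped Nat Topology

/-- The regularized upper incomplete gamma function `Q(n,x) = 1 - P(n,x)`. -/
noncomputable def regQ (n x : ℝ) : ℝ := 1 - regP n x

lemma intInt (n : ℝ) (hn : 0 < n) (x y : ℝ) :
    IntervalIntegrable (fun t => t ^ (n - 1) * Real.exp (-t)) volume x y :=
  (intervalIntegral.intervalIntegrable_rpow' (by linarith)).mul_continuousOn
    (Continuous.continuousOn (by continuity))

lemma hasDerivAt_lowGamma {n x : ℝ} (hn : 0 < n) (hx : 0 < x) :
    HasDerivAt (lowGamma n) (x ^ (n - 1) * Real.exp (-x)) x := by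
  apply intervalIntegral.integral_hasDerivAt_right (intInt n hn 0 x)
  · have hCO : ContinuousOn (fun t : ℝ => t ^ (n - 1) * Real.exp (-t)) (Set.Ioi 0) := by
      intro t ht
      exact ((Real.continuousAt_rpow_const t _ (Or.inl (ne_of_gt ht))).mul
        ((Real.continuous_exp.comp continuous_neg).continuousAt)).continuousWithinAt
    exact hCO.stronglyMeasurableAtFilter isOpen_Ioi x hx
  · exact ((Real.continuousAt_rpow_const x _ (Or.inl hx.ne')).mul
      ((Real.continuous_exp.comp continuous_neg).continuousAt))

lemma hasDerivAt_regP_sq {n c b : ℝ} (hn : 0 < n) (hc : 0 < c) (hb : 0 < b) :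
    HasDerivAt (fun b => regP n (c * b ^ 2))
      ((Real.Gamma n)⁻¹ * ((c * b ^ 2) ^ (n - 1) * Real.exp (-(c * b ^ 2)) * (2 * c * b))) b := by
  have h1 : HasDerivAt (fun b : ℝ => c * b ^ 2) (2 * c * b) b := by
    simpa [mul_comm, mul_assoc, mul_left_comm] using
      ((hasDerivAt_pow 2 b).const_mul c)
  have h2 := (hasDerivAt_lowGamma hn (by positivity : (0:ℝ) < c * b ^ 2)).comp b h1
  simpa [regP, mul_assoc] using h2.const_mul (Real.Gamma n)⁻¹

lemma hasDerivAt_poly (k : ℕ) (t : ℝ) :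
    HasDerivAt (fun t : ℝ => (k.factorial : ℝ) *
      (1 - Real.exp (-t) * ∑ j ∈ Finset.range (k+1), t ^ j / (j.factorial : ℝ)))
      (t ^ k * Real.exp (-t)) t := by
  have hsum : HasDerivAt (fun t : ℝ => ∑ j ∈ Finset.range (k+1), t ^ j / (j.factorial : ℝ))
      (∑ j ∈ Finset.range k, t ^ j / (j.factorial : ℝ)) t := by
    have h : HasDerivAt (fun t : ℝ => ∑ j ∈ Finset.range (k+1), t ^ j / (j.factorial : ℝ))
        (∑ j ∈ Finset.range (k+1), (j : ℝ) * t ^ (j-1) / (j.factorial : ℝ)) t := by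
      apply HasDerivAt.fun_sum
      intro j _
      simpa [div_eq_mul_inv] using (hasDerivAt_pow j t).mul_const ((j.factorial : ℝ))⁻¹
    convert h using 1
    rw [Finset.sum_range_succ']
    simp only [Nat.cast_zero, Nat.cast_succ, Nat.factorial, Nat.cast_mul, Nat.cast_add,
      Nat.cast_one, Nat.add_sub_cancel, zero_mul, Nat.factorial_zero, Nat.cast_one, zero_div,
      add_zero]
    apply Finset.sum_congr rfl
    intro j _
    have : (j.factorial : ℝ) ≠ 0 := Nat.cast_ne_zero.mpr (Nat.factorial_ne_zero j)
    field_simp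
  have hexp : HasDerivAt (fun t : ℝ => Real.exp (-t)) (-Real.exp (-t)) t := by
    simpa using (hasDerivAt_neg t).exp
  have h2 := (((hexp.mul hsum).const_sub 1).const_mul (k.factorial : ℝ))
  refine h2.congr_deriv (Eq.symm ?_)
  rw [Finset.sum_range_succ]
  have : (k.factorial : ℝ) ≠ 0 := Nat.cast_ne_zero.mpr (Nat.factorial_ne_zero k)
  field_simp
  ring

lemma lowGamma_nat_s2 (k : ℕ) (x : ℝ) :
    lowGamma (↑(k+1)) x = (k.factorial : ℝ) *
      (1 - Real.exp (-x) * ∑ j ∈ Finset.range (k+1), x ^ j / (j.factorial : ℝ)) := by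
  have hrw : lowGamma (↑(k+1)) x = ∫ t in (0:ℝ)..x, t ^ k * Real.exp (-t) := by
    have h1 : ((k+1 : ℕ) : ℝ) - 1 = ((k : ℕ) : ℝ) := by push_cast; ring
    rw [lowGamma, h1]
    simp_rw [Real.rpow_natCast]
  rw [hrw]
  have hcont : Continuous fun t : ℝ => t ^ k * Real.exp (-t) := by continuity
  rw [intervalIntegral.integral_eq_sub_of_hasDerivAt (fun t _ => hasDerivAt_poly k t)
    (hcont.intervalIntegrable 0 x)]
  simp [Finset.sum_range_succ', Nat.factorial]

lemma regP_nat_s2 (k : ℕ) (x : ℝ) :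
    regP (↑(k+1)) x = 1 - Real.exp (-x) * ∑ j ∈ Finset.range (k+1), x ^ j / (j.factorial : ℝ) := by
  rw [regP, lowGamma_nat_s2]
  have h1 : ((k+1 : ℕ) : ℝ) = (k : ℝ) + 1 := by push_cast; ring
  rw [h1, Real.Gamma_nat_eq_factorial]
  have : (k.factorial : ℝ) ≠ 0 := Nat.cast_ne_zero.mpr (Nat.factorial_ne_zero k)
  field_simp

lemma Gamma_half (k : ℕ) :
    Real.Gamma ((k : ℝ) + 1/2) = (Nat.doubleFactorial (2*k-1) : ℝ) * Real.sqrt π / 2 ^ k := by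
  induction k with
  | zero => simpa using Real.Gamma_one_half_eq
  | succ k ih =>
    have h1 : ((k+1 : ℕ) : ℝ) + 1/2 = ((k : ℝ) + 1/2) + 1 := by push_cast; ring
    rw [h1, Real.Gamma_add_one (by positivity), ih]
    have h2 : 2*(k+1)-1 = 2*k+1 := by omega
    rw [h2, Nat.doubleFactorial_add_one]
    push_cast
    field_simp
    ring

lemma Gamma_ratio (q k : ℕ) :
    Real.Gamma (((2*q+3 : ℕ) : ℝ)/2 + k) * (2 ^ k * (Nat.doubleFactorial (2*q+1) : ℝ))
      = Real.Gamma (((2*q+3 : ℕ) : ℝ)/2) * (Nat.doubleFactorial (2*q+2*k+1) : ℝ) := by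
  induction k with
  | zero => simp
  | succ k ih =>
    have h1 : ((2*q+3 : ℕ) : ℝ)/2 + (k+1 : ℕ) = (((2*q+3 : ℕ) : ℝ)/2 + k) + 1 := by
      push_cast; ring
    rw [h1, Real.Gamma_add_one (by positivity)]
    have h2 : 2*q+2*(k+1)+1 = (2*q+2*k+1)+2 := by omega
    rw [h2, Nat.doubleFactorial_add_two]
    have h4 : ((2*q+3 : ℕ) : ℝ)/2 + k = ((2*q+2*k+1)+2 : ℕ)/2 := by push_cast; ring
    calc (((2*q+3 : ℕ) : ℝ)/2 + k) * Real.Gamma (((2*q+3 : ℕ) : ℝ)/2 + k) * (2^(k+1) * ((2*q+1)‼ : ℝ))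
        = (((2*q+2*k+1)+2 : ℕ) : ℝ) * (Real.Gamma (((2*q+3 : ℕ) : ℝ)/2 + k) * (2^k * ((2*q+1)‼ : ℝ))) := by
          rw [h4]; push_cast; ring
      _ = Real.Gamma (((2*q+3 : ℕ) : ℝ)/2) * ((((2*q+2*k+1)+2 : ℕ) : ℝ) * ((2*q+2*k+1)‼ : ℝ)) := by
          rw [ih]; ring
      _ = _ := by push_cast; ring

lemma continuousOn_regP_sq {n c : ℝ} (hn : 0 < n) (hc : 0 < c) (a : ℝ) (ha : 0 ≤ a) :
    ContinuousOn (fun b => regP n (c * b ^ 2)) (Set.Icc 0 a) := by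
  have h1 : ContinuousOn (lowGamma n) (Set.uIcc 0 (c * a ^ 2)) :=
    intervalIntegral.continuousOn_primitive_interval' (intInt n hn 0 (c * a ^ 2))
      Set.left_mem_uIcc
  have h2 : Set.uIcc 0 (c * a ^ 2) = Set.Icc 0 (c * a ^ 2) :=
    Set.uIcc_of_le (by positivity)
  rw [h2] at h1
  have h3 : ContinuousOn (fun b : ℝ => c * b ^ 2) (Set.Icc 0 a) :=
    (continuous_const.mul (continuous_pow 2)).continuousOn
  have h4 : Set.MapsTo (fun b : ℝ => c * b ^ 2) (Set.Icc 0 a) (Set.Icc 0 (c * a ^ 2)) := by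
    intro b hb
    obtain ⟨hb1, hb2⟩ := hb
    constructor
    · positivity
    · have h5 : b ^ 2 ≤ a ^ 2 := by nlinarith
      exact mul_le_mul_of_nonneg_left h5 hc.le
  exact continuousOn_const.mul (h1.comp h3 h4)

lemma term1 (Nr : ℝ) (hN : 0 < Nr) (k : ℕ) (b : ℝ) (hb : 0 < b) :
    1 / Real.sqrt 2 * (((2*k-1)‼ : ℝ) / ((2*k)‼ : ℝ) *
      ((Real.Gamma ((k:ℝ) + 1/2))⁻¹ *
        ((Nr * b^2) ^ ((k:ℝ) + 1/2 - 1) * Real.exp (-(Nr * b^2)) * (2 * Nr * b))))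
      = 2 * Real.sqrt (Nr / (2*π)) *
        (Real.exp (-(Nr*b^2)) * ((Nr*b^2) ^ k / (k.factorial : ℝ))) := by
  have hy : (0:ℝ) < Nr * b^2 := by positivity
  have hexp : ((k:ℝ) + 1/2 - 1) = (k:ℝ) + (-(1/2)) := by ring
  rw [hexp, Real.rpow_add hy, Real.rpow_natCast, Real.rpow_neg hy.le]
  have hhalf : (Nr * b^2) ^ ((1:ℝ)/2) = Real.sqrt Nr * b := by
    rw [← Real.sqrt_eq_rpow, Real.sqrt_mul hN.le, Real.sqrt_sq hb.le]
  rw [hhalf, Gamma_half, Nat.doubleFactorial_two_mul]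
  have hsqrtdiv : Real.sqrt (Nr / (2*π)) = Real.sqrt Nr / (Real.sqrt 2 * Real.sqrt π) := by
    rw [Real.sqrt_div hN.le, Real.sqrt_mul (by norm_num : (0:ℝ) ≤ 2)]
  rw [hsqrtdiv]
  have hπ : (0:ℝ) < π := Real.pi_pos
  have hs2 : Real.sqrt 2 * Real.sqrt 2 = 2 := Real.mul_self_sqrt (by norm_num)
  have hsN : Real.sqrt Nr * Real.sqrt Nr = Nr := Real.mul_self_sqrt hN.le
  have hD : ((2*k-1)‼ : ℝ) ≠ 0 := Nat.cast_ne_zero.mpr (Nat.doubleFactorial_pos _).ne'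
  have hfac : ((k.factorial : ℝ)) ≠ 0 := Nat.cast_ne_zero.mpr (Nat.factorial_ne_zero k)
  have hsπ : Real.sqrt π ≠ 0 := (Real.sqrt_pos.mpr hπ).ne'
  have hs2' : Real.sqrt 2 ≠ 0 := by positivity
  have hsN' : Real.sqrt Nr ≠ 0 := (Real.sqrt_pos.mpr hN).ne'
  have h2k : ((2:ℝ))^k ≠ 0 := by positivity
  push_cast
  field_simp
  ring_nf
  rw [Real.sq_sqrt hN.le]

lemma term2 (q : ℕ) (b : ℝ) (hb : 0 < b) :
    (Real.Gamma (((2*q+3:ℕ):ℝ)/2))⁻¹ *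
        (((((2*q+3:ℕ):ℝ)/2) * b^2) ^ ((((2*q+3:ℕ):ℝ)/2) - 1) *
          Real.exp (-((((2*q+3:ℕ):ℝ)/2) * b^2)) * (2 * (((2*q+3:ℕ):ℝ)/2) * b))
      = 2 * (((2*q+3:ℕ):ℝ) ^ (((2*q+3:ℕ):ℝ)/2) /
          ((2:ℝ) ^ (((2*q+3:ℕ):ℝ)/2) * Real.Gamma (((2*q+3:ℕ):ℝ)/2)))
        * Real.exp (-(((2*q+3:ℕ):ℝ) * b^2)/2) * b ^ (2*q+2) := by
  set Nr : ℝ := ((2*q+3:ℕ):ℝ) with hNr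
  have hNpos : (0:ℝ) < Nr := by rw [hNr]; positivity
  set u : ℝ := Nr/2 with hu
  have hupos : 0 < u := by positivity
  have hsplit : ((u * b^2) : ℝ) ^ (u - 1) = u ^ (u-1) * (b^2) ^ (u-1) :=
    Real.mul_rpow hupos.le (by positivity)
  have h1 : u ^ (u-1) = (Nr ^ u / Nr) / (2 ^ u / 2) := by
    rw [hu, Real.div_rpow hNpos.le (by norm_num : (0:ℝ) ≤ 2),
      Real.rpow_sub hNpos, Real.rpow_one, Real.rpow_sub (by norm_num : (0:ℝ) < 2),
      Real.rpow_one]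
  have h2 : ((b^2 : ℝ)) ^ (u-1) = b ^ (2*q+1) := by
    rw [← Real.rpow_natCast b 2, ← Real.rpow_mul hb.le]
    have : ((2:ℕ):ℝ) * (u - 1) = ((2*q+1 : ℕ) : ℝ) := by
      rw [hu, hNr]; push_cast; ring
    rw [this, Real.rpow_natCast]
  have hexp : -(u * b^2) = -(Nr * b^2)/2 := by rw [hu]; ring
  rw [hsplit, h1, h2, hexp]
  have hG : Real.Gamma u ≠ 0 := (Real.Gamma_pos_of_pos hupos).ne'
  have h2u : (2:ℝ) ^ u ≠ 0 := (Real.rpow_pos_of_pos (by norm_num) u).ne'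
  have hb1 : b ^ (2*q+2) = b ^ (2*q+1) * b := by rw [pow_succ]
  rw [hb1]
  field_simp
  ring

lemma term3 (q k : ℕ) (b : ℝ) (hb : 0 < b) :
    1 / ((2:ℝ) ^ (((2*q+3:ℕ):ℝ)/2) * ((2*q+1)‼ : ℝ)) *
      (((2*q+2*k+1)‼ : ℝ) / ((2:ℝ)^k * ((2*k)‼ : ℝ)) *
        ((Real.Gamma (((2*q+3:ℕ):ℝ)/2 + k))⁻¹ *
          ((((2*q+3:ℕ):ℝ) * b^2) ^ ((((2*q+3:ℕ):ℝ)/2 + k) - 1) *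
            Real.exp (-(((2*q+3:ℕ):ℝ) * b^2)) * (2 * ((2*q+3:ℕ):ℝ) * b))))
      = 2 * (((2*q+3:ℕ):ℝ) ^ (((2*q+3:ℕ):ℝ)/2) /
          ((2:ℝ) ^ (((2*q+3:ℕ):ℝ)/2) * Real.Gamma (((2*q+3:ℕ):ℝ)/2)))
        * Real.exp (-(((2*q+3:ℕ):ℝ) * b^2)/2) * b ^ (2*q+2)
        * (Real.exp (-(((2*q+3:ℕ):ℝ) * b^2)/2) *
          ((((2*q+3:ℕ):ℝ) * b^2/2) ^ k / (k.factorial : ℝ))) := by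
  set Nr : ℝ := ((2*q+3:ℕ):ℝ) with hNr
  have hNpos : (0:ℝ) < Nr := by rw [hNr]; positivity
  set u : ℝ := Nr/2 with hu
  have hupos : 0 < u := by positivity
  -- Gamma value
  have hGR := Gamma_ratio q k
  have hGpos : 0 < Real.Gamma (u + k) := Real.Gamma_pos_of_pos (by positivity)
  have hGpos0 : 0 < Real.Gamma u := Real.Gamma_pos_of_pos hupos
  -- rpow splits
  have hsplit : ((Nr * b^2) : ℝ) ^ (u + k - 1) = Nr ^ (u + k - 1) * (b^2) ^ (u + k - 1) :=
    Real.mul_rpow hNpos.le (by positivity)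
  have h1 : Nr ^ (u + (k:ℝ) - 1) = Nr ^ u * Nr ^ (k:ℕ) / Nr := by
    rw [show u + (k:ℝ) - 1 = u + (k:ℝ) + (-1) by ring, Real.rpow_add hNpos,
      Real.rpow_add hNpos, Real.rpow_natCast, Real.rpow_neg_one]
    ring
  have h2 : ((b^2 : ℝ)) ^ (u + (k:ℝ) - 1) = b ^ (2*q+2*k+1) := by
    rw [← Real.rpow_natCast b 2, ← Real.rpow_mul hb.le]
    have : ((2:ℕ):ℝ) * (u + (k:ℝ) - 1) = ((2*q+2*k+1 : ℕ) : ℝ) := by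
      rw [hu, hNr]; push_cast; ring
    rw [this, Real.rpow_natCast]
  have hexp : Real.exp (-(Nr * b^2)) =
      Real.exp (-(Nr * b^2)/2) * Real.exp (-(Nr * b^2)/2) := by
    rw [← Real.exp_add]; ring_nf
  have hdf : ((2*k)‼ : ℝ) = 2^k * (k.factorial : ℝ) := by
    rw [Nat.doubleFactorial_two_mul]; push_cast; ring
  have hGam : Real.Gamma (u + k) = Real.Gamma u * ((2*q+2*k+1)‼ : ℝ) /
      (2^k * ((2*q+1)‼ : ℝ)) := by
    have hd : ((2*q+1)‼ : ℝ) ≠ 0 := Nat.cast_ne_zero.mpr (Nat.doubleFactorial_pos _).ne'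
    field_simp
    linarith [hGR]
  rw [hsplit, h1, h2, hexp, hGam, hdf]
  have hd1 : ((2*q+1)‼ : ℝ) ≠ 0 := Nat.cast_ne_zero.mpr (Nat.doubleFactorial_pos _).ne'
  have hd2 : ((2*q+2*k+1)‼ : ℝ) ≠ 0 := Nat.cast_ne_zero.mpr (Nat.doubleFactorial_pos _).ne'
  have hfac : ((k.factorial : ℝ)) ≠ 0 := Nat.cast_ne_zero.mpr (Nat.factorial_ne_zero k)
  have h2u : (2:ℝ) ^ u ≠ 0 := (Real.rpow_pos_of_pos (by norm_num) u).ne'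
  have hG0 : Real.Gamma u ≠ 0 := hGpos0.ne'
  have hbp : b ^ (2*q+2*k+1) * b = b ^ (2*q+2) * b ^ (2*k) := by
    rw [← pow_succ, ← pow_add]
    congr 1
    omega
  have hdivk : (Nr * b^2/2) ^ k = Nr^k * b^(2*k) / 2^k := by
    rw [div_pow, mul_pow, ← pow_mul]
  field_simp
  ring_nf
  have h12 : ((1:ℝ)/2)^k * 2^k = 1 := by rw [← mul_pow]; norm_num
  rw [mul_assoc _ ((1/2:ℝ)^k) (2^k), h12, mul_one]

theorem expected_number_real_eigenvalues_GinOE_odd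
    (N : ℕ) (hN : 3 ≤ N) (hodd : Odd N) (a : ℝ) (ha : 0 ≤ a) :
    (∫ x in (-a)..a,
        (Real.sqrt (N / (2 * π)) * regQ (N - 1) (N * x ^ 2)
          + (N : ℝ) ^ ((N : ℝ) / 2) / ((2 : ℝ) ^ ((N : ℝ) / 2) * Real.Gamma (N / 2))
            * Real.exp (-(N * x ^ 2) / 2) * |x| ^ (N - 1)
            * regP ((N - 1) / 2) (N * x ^ 2 / 2)))
      = (1 / Real.sqrt 2) * ∑ k ∈ Finset.range (N - 1),
            (Nat.doubleFactorial (2 * k - 1) : ℝ) / (Nat.doubleFactorial (2 * k) : ℝ)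
              * regP (k + 1 / 2) (N * a ^ 2)
        + regP ((N : ℝ) / 2) (N * a ^ 2 / 2)
        - (1 / ((2 : ℝ) ^ ((N : ℝ) / 2) * (Nat.doubleFactorial (N - 2) : ℝ)))
          * ∑ k ∈ Finset.range ((N - 3) / 2 + 1),
              (Nat.doubleFactorial (N + 2 * k - 2) : ℝ)
                / ((2 : ℝ) ^ k * (Nat.doubleFactorial (2 * k) : ℝ))
                * regP ((N : ℝ) / 2 + k) (N * a ^ 2) := by
  obtain ⟨q, rfl⟩ : ∃ q, N = 2*q+3 := ⟨(N-3)/2, by obtain ⟨t, ht⟩ := hodd; omega⟩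
  clear hN hodd
  have hg1 : 2*q+3-1 = 2*q+2 := by omega
  have hg2 : (2*q+3-3)/2 + 1 = q+1 := by omega
  have hg3 : 2*q+3-2 = 2*q+1 := by omega
  rw [hg1, hg2, hg3]
  set Nr : ℝ := ((2*q+3:ℕ):ℝ) with hNr
  have hNpos : (0:ℝ) < Nr := by rw [hNr]; positivity
  have hcast1 : Nr - 1 = ((2*q+1+1 : ℕ):ℝ) := by rw [hNr]; push_cast; ring
  have hcast2 : (Nr - 1)/2 = ((q+1 : ℕ):ℝ) := by rw [hNr]; push_cast; ring
  set C : ℝ := Nr ^ (Nr/2) / ((2:ℝ) ^ (Nr/2) * Real.Gamma (Nr/2)) with hC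
  set E : ℝ := 1 / ((2:ℝ) ^ (Nr/2) * ((2*q+1)‼ : ℝ)) with hE
  -- elementary form of the integrand
  set f₀ : ℝ → ℝ := fun x =>
    Real.sqrt (Nr/(2*π)) * (Real.exp (-(Nr*x^2)) *
        ∑ j ∈ Finset.range (2*q+2), (Nr*x^2)^j/(j.factorial : ℝ))
      + C * Real.exp (-(Nr*x^2)/2) * |x|^(2*q+2) *
        (1 - Real.exp (-(Nr*x^2)/2) *
          ∑ j ∈ Finset.range (q+1), (Nr*x^2/2)^j/(j.factorial : ℝ)) with hf₀
  have hint_eq : ∀ x : ℝ,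
      Real.sqrt (Nr / (2 * π)) * regQ (Nr - 1) (Nr * x ^ 2)
        + Nr ^ (Nr / 2) / ((2:ℝ) ^ (Nr / 2) * Real.Gamma (Nr / 2))
          * Real.exp (-(Nr * x ^ 2) / 2) * |x| ^ (2*q+2)
          * regP ((Nr - 1) / 2) (Nr * x ^ 2 / 2) = f₀ x := by
    intro x
    rw [hcast2, hcast1, regQ, regP_nat_s2, regP_nat_s2, hf₀]
    have hq1 : (2*q+1+1) = 2*q+2 := by omega
    rw [hq1, show -(Nr*x^2/2) = -(Nr*x^2)/2 by ring]
    simp only []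
    ring
  simp only [hC, hint_eq]
  -- continuity of the elementary integrand
  have hsq : Continuous fun x : ℝ => Nr * x ^ 2 := continuous_const.mul (continuous_pow 2)
  have hexp1 : Continuous fun x : ℝ => Real.exp (-(Nr * x ^ 2)) :=
    Real.continuous_exp.comp hsq.neg
  have hexp2 : Continuous fun x : ℝ => Real.exp (-(Nr * x ^ 2) / 2) :=
    Real.continuous_exp.comp (hsq.neg.div_const 2)
  have hf₀cont : Continuous f₀ := by
    rw [hf₀]
    apply Continuous.add
    · apply continuous_const.mul
      apply hexp1.mul
      exact continuous_finset_sum _ fun j _ => ((hsq.pow j).div_const _)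
    · apply Continuous.mul
      · exact ((continuous_const.mul hexp2).mul (continuous_abs.pow _))
      · apply Continuous.sub continuous_const
        apply hexp2.mul
        exact continuous_finset_sum _ fun j _ => (((hsq.div_const 2).pow j).div_const _)
  -- reduce to one-sided integral
  have heven : ∀ x : ℝ, f₀ (-x) = f₀ x := by
    intro x
    simp only [hf₀, neg_sq, abs_neg]
  have hsplit : (∫ x in (-a)..a, f₀ x) = 2 * ∫ x in (0:ℝ)..a, f₀ x := by
    have h1 : (∫ x in (-a)..(0:ℝ), f₀ x) = ∫ x in (0:ℝ)..a, f₀ x := by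
      have h2 : (∫ x in (0:ℝ)..a, f₀ (-x)) = ∫ x in (-a)..(-0:ℝ), f₀ x :=
        intervalIntegral.integral_comp_neg f₀
      rw [neg_zero] at h2
      rw [← h2]
      simp only [heven]
    rw [← intervalIntegral.integral_add_adjacent_intervals
      (hf₀cont.intervalIntegrable (-a) 0) (hf₀cont.intervalIntegrable 0 a), h1, two_mul]
  rw [hsplit, show Nr * a^2/2 = (Nr/2) * a^2 by ring]
  set F : ℝ → ℝ := fun b => ∫ x in (0:ℝ)..b, f₀ x with hFdef
  set Φ : ℝ → ℝ := fun b =>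
    (1 / Real.sqrt 2) * ∑ k ∈ Finset.range (2*q+2),
        ((2*k-1)‼ : ℝ) / ((2*k)‼ : ℝ) * regP ((k:ℝ) + 1/2) (Nr * b^2)
      + regP (Nr/2) ((Nr/2) * b^2)
      - E * ∑ k ∈ Finset.range (q+1),
          ((2*q+3+2*k-2)‼ : ℝ) / ((2:ℝ)^k * ((2*k)‼ : ℝ)) * regP (Nr/2 + (k:ℝ)) (Nr * b^2)
    with hΦ
  show 2 * F a = Φ a
  have hP0 : ∀ n c : ℝ, regP n (c * 0^2) = 0 := by
    intro n c
    norm_num [regP, lowGamma]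
  have hΦ0 : Φ 0 = 0 := by
    rw [hΦ]
    simp only [hP0, mul_zero, Finset.sum_const_zero, add_zero, zero_add, sub_zero, zero_sub,
      neg_zero]
  rcases eq_or_lt_of_le ha with hc0 | hapos
  · rw [← hc0]
    rw [hΦ0, hFdef]
    simp
  -- derivative of F
  have hFd : ∀ b : ℝ, HasDerivAt F (f₀ b) b := fun b =>
    intervalIntegral.integral_hasDerivAt_right (hf₀cont.intervalIntegrable _ _)
      (hf₀cont.stronglyMeasurableAtFilter _ _) hf₀cont.continuousAt
  have hFcont : Continuous F := by
    rw [continuous_iff_continuousAt]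
    exact fun b => (hFd b).continuousAt
  -- derivative of Φ
  have hΦd : ∀ b : ℝ, 0 < b → HasDerivAt Φ (2 * f₀ b) b := by
    intro b hb
    have hT1 : HasDerivAt (fun b : ℝ => ∑ k ∈ Finset.range (2*q+2),
        ((2*k-1)‼ : ℝ) / ((2*k)‼ : ℝ) * regP ((k:ℝ) + 1/2) (Nr * b^2))
        (∑ k ∈ Finset.range (2*q+2), ((2*k-1)‼ : ℝ) / ((2*k)‼ : ℝ) *
          ((Real.Gamma ((k:ℝ)+1/2))⁻¹ *
            ((Nr*b^2) ^ ((k:ℝ)+1/2-1) * Real.exp (-(Nr*b^2)) * (2*Nr*b)))) b :=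
      HasDerivAt.fun_sum fun k _ =>
        ((hasDerivAt_regP_sq (by positivity) hNpos hb).const_mul _)
    have hT2 : HasDerivAt (fun b : ℝ => regP (Nr/2) ((Nr/2) * b^2))
        ((Real.Gamma (Nr/2))⁻¹ *
          (((Nr/2)*b^2) ^ (Nr/2-1) * Real.exp (-((Nr/2)*b^2)) * (2*(Nr/2)*b))) b :=
      hasDerivAt_regP_sq (by positivity) (by positivity) hb
    have hT3 : HasDerivAt (fun b : ℝ => ∑ k ∈ Finset.range (q+1),
        ((2*q+3+2*k-2)‼ : ℝ) / ((2:ℝ)^k * ((2*k)‼ : ℝ)) * regP (Nr/2 + (k:ℝ)) (Nr * b^2))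
        (∑ k ∈ Finset.range (q+1), ((2*q+3+2*k-2)‼ : ℝ) / ((2:ℝ)^k * ((2*k)‼ : ℝ)) *
          ((Real.Gamma (Nr/2 + (k:ℝ)))⁻¹ *
            ((Nr*b^2) ^ (Nr/2 + (k:ℝ)-1) * Real.exp (-(Nr*b^2)) * (2*Nr*b)))) b :=
      HasDerivAt.fun_sum fun k _ =>
        ((hasDerivAt_regP_sq (by positivity) hNpos hb).const_mul _)
    have hD := ((hT1.const_mul (1/Real.sqrt 2)).add hT2).sub (hT3.const_mul E)
    rw [hΦ]
    refine hD.congr_deriv (Eq.symm ?_)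
    -- algebra: claimed derivative equals computed one
    have e1 : (1/Real.sqrt 2) * ∑ k ∈ Finset.range (2*q+2),
        ((2*k-1)‼ : ℝ) / ((2*k)‼ : ℝ) *
          ((Real.Gamma ((k:ℝ)+1/2))⁻¹ *
            ((Nr*b^2) ^ ((k:ℝ)+1/2-1) * Real.exp (-(Nr*b^2)) * (2*Nr*b)))
        = ∑ k ∈ Finset.range (2*q+2), 2 * Real.sqrt (Nr/(2*π)) *
            (Real.exp (-(Nr*b^2)) * ((Nr*b^2)^k / (k.factorial : ℝ))) := by
      rw [Finset.mul_sum]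
      exact Finset.sum_congr rfl fun k _ => term1 Nr hNpos k b hb
    have e2 := term2 q b hb
    have e3 : E * ∑ k ∈ Finset.range (q+1),
        ((2*q+3+2*k-2)‼ : ℝ) / ((2:ℝ)^k * ((2*k)‼ : ℝ)) *
          ((Real.Gamma (Nr/2 + (k:ℝ)))⁻¹ *
            ((Nr*b^2) ^ (Nr/2 + (k:ℝ)-1) * Real.exp (-(Nr*b^2)) * (2*Nr*b)))
        = ∑ k ∈ Finset.range (q+1), 2 * C * Real.exp (-(Nr*b^2)/2) * b^(2*q+2) *
            (Real.exp (-(Nr*b^2)/2) * ((Nr*b^2/2)^k / (k.factorial : ℝ))) := by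
      rw [Finset.mul_sum]
      refine Finset.sum_congr rfl fun k _ => ?_
      rw [hE, show (2*q+3+2*k-2) = 2*q+2*k+1 by omega]
      exact term3 q k b hb
    rw [e1, e3, e2]
    simp only [hf₀]
    rw [abs_of_pos hb]
    rw [← Finset.mul_sum, ← Finset.mul_sum, ← Finset.mul_sum, ← Finset.mul_sum]
    rw [← hC]
    ring
  -- continuity of Φ
  have hΦcont : ContinuousOn Φ (Set.Icc 0 a) := by
    rw [hΦ]
    apply ContinuousOn.sub
    apply ContinuousOn.add
    · exact continuousOn_const.mul (continuousOn_finset_sum _ fun k _ =>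
        continuousOn_const.mul (continuousOn_regP_sq (by positivity) hNpos a ha))
    · exact continuousOn_regP_sq (by positivity) (by positivity) a ha
    · exact continuousOn_const.mul (continuousOn_finset_sum _ fun k _ =>
        continuousOn_const.mul (continuousOn_regP_sq (by positivity) hNpos a ha))
  have hGcont : ContinuousOn (fun b => Φ b - 2 * F b) (Set.Icc 0 a) :=
    hΦcont.sub ((continuous_const.mul hFcont).continuousOn)
  -- constancy on (0, a]
  have hconst : ∀ c ∈ Set.Ioc (0:ℝ) a, Φ a - 2 * F a = Φ c - 2 * F c := by
    intro c hc
    have := constant_of_has_deriv_right_zero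
      (f := fun b => Φ b - 2 * F b) (a := c) (b := a)
      (hGcont.mono (Set.Icc_subset_Icc_left hc.1.le))
      (fun x hx => by
        have hx0 : 0 < x := lt_of_lt_of_le hc.1 hx.1
        have : HasDerivAt (fun b => Φ b - 2 * F b) (2 * f₀ x - 2 * f₀ x) x :=
          (hΦd x hx0).sub ((hFd x).const_mul 2)
        simpa using this.hasDerivWithinAt)
    exact this a ⟨hc.2, le_refl a⟩
  -- take the limit c → 0⁺
  have hne : (𝓝[Set.Ioc (0:ℝ) a] (0:ℝ)).NeBot := by
    rw [← mem_closure_iff_nhdsWithin_neBot, closure_Ioc hapos.ne]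
    exact ⟨le_refl 0, ha⟩
  have hlim1 : Tendsto (fun c => Φ c - 2 * F c) (𝓝[Set.Ioc (0:ℝ) a] 0)
      (𝓝 (Φ 0 - 2 * F 0)) :=
    (hGcont 0 ⟨le_refl 0, ha⟩).mono Set.Ioc_subset_Icc_self
  have hlim2 : Tendsto (fun c => Φ c - 2 * F c) (𝓝[Set.Ioc (0:ℝ) a] 0)
      (𝓝 (Φ a - 2 * F a)) := by
    refine Tendsto.congr' ?_ (tendsto_const_nhds (α := ℝ) (f := 𝓝[Set.Ioc (0:ℝ) a] 0))
    filter_upwards [self_mem_nhdsWithin] with c hc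
    exact hconst c hc
  have hkey := tendsto_nhds_unique hlim2 hlim1
  have hF0 : F 0 = 0 := by rw [hFdef]; simp
  rw [hΦ0, hF0] at hkey
  linarith
end

section
/- For every r ≥ 0, (1/√(2π)) · ∫₀^{2π} r |sin θ| · erfc(√2 · r |sin θ|) · e^{2 r² sin² θ} dθ = 1 - e^{2 r²} erfc(√2 · r). (This identifies the radial density of the complex eigenvalues of the real Ginibre ensemble obtained after performing the angular integral.) -/
open MeasureTheory Real Filter

/-- The error function `erf(x) = (2/√π) ∫₀^x e^(-t²) dt`. -/
noncomputable def erf (x : ℝ) : ℝ := (2 / Real.sqrt π) * ∫ t in (0:ℝ)..x, Real.exp (-t ^ 2)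

/-- The complementary error function `erfc(x) = 1 - erf(x)`. -/
noncomputable def erfc (x : ℝ) : ℝ := 1 - erf x

namespace GinOE

lemma erf_hasDerivAt (x : ℝ) :
    HasDerivAt erf (2 / Real.sqrt π * Real.exp (-x ^ 2)) x := by
  have hc : Continuous fun t : ℝ => Real.exp (-t ^ 2) := by continuity
  have h := intervalIntegral.integral_hasDerivAt_right
    (hc.intervalIntegrable 0 x) (hc.stronglyMeasurableAtFilter volume (nhds x))
    hc.continuousAt
  exact h.const_mul (2 / Real.sqrt π)

lemma erf_zero : erf 0 = 0 := by simp [erf]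

lemma erfc_zero : erfc 0 = 1 := by simp [erfc, erf_zero]

noncomputable def g (s : ℝ) : ℝ := Real.exp (2 * s ^ 2) * erfc (Real.sqrt 2 * s)

noncomputable def gd (s : ℝ) : ℝ := 4 * s * g s - 2 * Real.sqrt 2 / Real.sqrt π

lemma gd_def (s : ℝ) : gd s = 4 * s * g s - 2 * Real.sqrt 2 / Real.sqrt π := rfl

lemma g_zero : g 0 = 1 := by simp [g, erfc_zero]

lemma g_hasDerivAt (s : ℝ) : HasDerivAt g (gd s) s := by
  have h1 : HasDerivAt (fun s : ℝ => 2 * s ^ 2) (4 * s) s := by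
    have := (hasDerivAt_pow 2 s).const_mul (2:ℝ)
    simpa using this.congr_deriv (by push_cast; ring)
  have hexp : HasDerivAt (fun s : ℝ => Real.exp (2 * s ^ 2))
      (Real.exp (2 * s ^ 2) * (4 * s)) s := h1.exp
  have h2 : HasDerivAt (fun s : ℝ => Real.sqrt 2 * s) (Real.sqrt 2) s := by
    simpa using (hasDerivAt_id s).const_mul (Real.sqrt 2)
  have herf : HasDerivAt (fun s : ℝ => erf (Real.sqrt 2 * s))
      (2 / Real.sqrt π * Real.exp (-(Real.sqrt 2 * s) ^ 2) * Real.sqrt 2) s :=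
    (erf_hasDerivAt (Real.sqrt 2 * s)).comp s h2
  have herfc : HasDerivAt (fun s : ℝ => erfc (Real.sqrt 2 * s))
      (-(2 / Real.sqrt π * Real.exp (-(Real.sqrt 2 * s) ^ 2) * Real.sqrt 2)) s := by
    simpa [erfc] using herf.const_sub 1
  have := hexp.mul herfc
  refine this.congr_deriv ?_
  have hs2 : (Real.sqrt 2 * s) ^ 2 = 2 * s ^ 2 := by
    rw [mul_pow, Real.sq_sqrt (by norm_num : (2:ℝ) ≥ 0)]
  have hee : Real.exp (2 * s ^ 2) * Real.exp (-(2 * s ^ 2)) = 1 := by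
    rw [← Real.exp_add]; simp
  have key : Real.exp (2 * s ^ 2) * -(2 / Real.sqrt π * Real.exp (-(2 * s ^ 2)) * Real.sqrt 2)
      = -(2 * Real.sqrt 2 / Real.sqrt π) := by
    rw [show Real.exp (2 * s ^ 2) * -(2 / Real.sqrt π * Real.exp (-(2 * s ^ 2)) * Real.sqrt 2)
        = -((Real.exp (2 * s ^ 2) * Real.exp (-(2 * s ^ 2))) * (2 * Real.sqrt 2 / Real.sqrt π))
      from by ring, hee, one_mul]
  rw [gd, g, hs2, key]
  ring

lemma erf_continuous : Continuous erf :=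
  Differentiable.continuous (fun x => (erf_hasDerivAt x).differentiableAt)

lemma erfc_continuous : Continuous erfc := by
  have : Continuous fun x : ℝ => 1 - erf x := continuous_const.sub erf_continuous
  exact this

lemma g_continuous : Continuous g :=
  Differentiable.continuous (fun x => (g_hasDerivAt x).differentiableAt)

lemma gd_continuous : Continuous gd := by
  have : Continuous fun s : ℝ => 4 * s * GinOE.g s - 2 * Real.sqrt 2 / Real.sqrt π :=
    ((continuous_const.mul continuous_id).mul g_continuous).sub continuous_const
  exact this

noncomputable def J (r : ℝ) : ℝ := ∫ θ in (0:ℝ)..(π/2), r * Real.sin θ * g (r * Real.sin θ)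

lemma F_cont (x : ℝ) : Continuous fun θ : ℝ => x * Real.sin θ * g (x * Real.sin θ) :=
  ((continuous_const.mul Real.continuous_sin).mul
    (g_continuous.comp (continuous_const.mul Real.continuous_sin)))

lemma F'_cont (x : ℝ) : Continuous fun θ : ℝ =>
    Real.sin θ * g (x * Real.sin θ) + x * Real.sin θ ^ 2 * gd (x * Real.sin θ) :=
  ((Real.continuous_sin.mul
      (g_continuous.comp (continuous_const.mul Real.continuous_sin))).add
    ((continuous_const.mul (Real.continuous_sin.pow 2)).mul
      (gd_continuous.comp (continuous_const.mul Real.continuous_sin))))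

lemma J_hasDerivAt' (r : ℝ) :
    HasDerivAt J (∫ θ in (0:ℝ)..(π/2),
      (Real.sin θ * g (r * Real.sin θ) + r * Real.sin θ ^ 2 * gd (r * Real.sin θ))) r := by
  obtain ⟨M, hM⟩ := (isCompact_Icc (a := -(|r|+1)) (b := |r|+1)).exists_bound_of_continuousOn
    g_continuous.continuousOn
  have hM0 : 0 ≤ M := le_trans (norm_nonneg _)
    (hM 0 ⟨by nlinarith [abs_nonneg r], by nlinarith [abs_nonneg r]⟩)
  obtain ⟨N, hN⟩ := (isCompact_Icc (a := -(|r|+1)) (b := |r|+1)).exists_bound_of_continuousOn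
    gd_continuous.continuousOn
  have hN0 : 0 ≤ N := le_trans (norm_nonneg _)
    (hN 0 ⟨by nlinarith [abs_nonneg r], by nlinarith [abs_nonneg r]⟩)
  have key := intervalIntegral.hasDerivAt_integral_of_dominated_loc_of_deriv_le
    (𝕜 := ℝ) (μ := volume) (a := 0) (b := π/2)
    (F := fun x θ => x * Real.sin θ * g (x * Real.sin θ))
    (F' := fun x θ => Real.sin θ * g (x * Real.sin θ) + x * Real.sin θ ^ 2 * gd (x * Real.sin θ))
    (x₀ := r) (bound := fun _ => M + (|r|+1) * N) (s := Metric.ball r 1) (Metric.ball_mem_nhds r one_pos)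
    (Eventually.of_forall fun x => (F_cont x).aestronglyMeasurable)
    ((F_cont r).intervalIntegrable 0 (π/2))
    (F'_cont r).aestronglyMeasurable
    ?_ (intervalIntegrable_const) ?_
  · exact key.2
  · refine Eventually.of_forall fun θ _ x hx => ?_
    have hxr : |x| ≤ |r| + 1 := by
      have := Metric.mem_ball.mp hx
      rw [Real.dist_eq] at this
      calc |x| = |x - r + r| := by ring_nf
        _ ≤ |x - r| + |r| := abs_add_le _ _
        _ ≤ |r| + 1 := by linarith
    have hs : |Real.sin θ| ≤ 1 := Real.abs_sin_le_one θ
    have ha : |x * Real.sin θ| ≤ |r| + 1 := by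
      rw [abs_mul]
      calc |x| * |Real.sin θ| ≤ (|r|+1) * 1 :=
        mul_le_mul hxr hs (abs_nonneg _) (by positivity)
      _ = |r| + 1 := mul_one _
    have hmem : x * Real.sin θ ∈ Set.Icc (-(|r|+1)) (|r|+1) := by
      constructor <;> [linarith [abs_le.mp ha |>.1]; exact (abs_le.mp ha).2]
    have hg : |g (x * Real.sin θ)| ≤ M := hM _ hmem
    have hgd : |gd (x * Real.sin θ)| ≤ N := hN _ hmem
    have hsq : Real.sin θ ^ 2 ≤ 1 := Real.sin_sq_le_one θ
    calc ‖Real.sin θ * g (x * Real.sin θ) + x * Real.sin θ ^ 2 * gd (x * Real.sin θ)‖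
        ≤ |Real.sin θ * g (x * Real.sin θ)| + |x * Real.sin θ ^ 2 * gd (x * Real.sin θ)| :=
          abs_add_le _ _
      _ = |Real.sin θ| * |g (x * Real.sin θ)|
          + |x| * Real.sin θ ^ 2 * |gd (x * Real.sin θ)| := by
            rw [abs_mul, abs_mul, abs_mul, abs_pow, sq_abs]
      _ ≤ 1 * M + (|r|+1) * 1 * N := by
            gcongr <;> first
              | exact hs | exact hg | exact hxr | exact hsq | exact hgd
              | positivity
      _ = M + (|r|+1) * N := by ring
  · refine Eventually.of_forall fun θ _ x _ => ?_
    have h1 : HasDerivAt (fun x : ℝ => x * Real.sin θ) (Real.sin θ) x := by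
      simpa using (hasDerivAt_id x).mul_const (Real.sin θ)
    have h2 : HasDerivAt (fun x : ℝ => g (x * Real.sin θ))
        (gd (x * Real.sin θ) * Real.sin θ) x := (g_hasDerivAt _).comp x h1
    have := h1.mul h2
    refine this.congr_deriv ?_
    ring

lemma sqrt_two_pi_eq : Real.sqrt (2*π) = Real.sqrt 2 * Real.sqrt π :=
  Real.sqrt_mul (by norm_num) π

lemma key_const : 2 * Real.sqrt 2 / Real.sqrt π * (π/2) = Real.sqrt (2*π) := by
  rw [sqrt_two_pi_eq]
  calc 2 * Real.sqrt 2 / Real.sqrt π * (π/2) = Real.sqrt 2 * (π / Real.sqrt π) := by ring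
    _ = Real.sqrt 2 * Real.sqrt π := by rw [Real.div_sqrt]

lemma integral_F' (r : ℝ) :
    (∫ θ in (0:ℝ)..(π/2),
      (Real.sin θ * g (r * Real.sin θ) + r * Real.sin θ ^ 2 * gd (r * Real.sin θ)))
    = 1 + 4*r*(J r) - Real.sqrt (2*π) * r := by
  have hsplit : ∀ θ : ℝ,
      Real.sin θ * g (r * Real.sin θ) + r * Real.sin θ ^ 2 * gd (r * Real.sin θ)
      = (Real.sin θ * g (r * Real.sin θ) - r * Real.cos θ ^ 2 * gd (r * Real.sin θ))
        + (4*r*(r * Real.sin θ * g (r * Real.sin θ)) - r * (2 * Real.sqrt 2 / Real.sqrt π)) := by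
    intro θ
    have h := Real.sin_sq_add_cos_sq θ
    rw [gd_def]
    linear_combination (r * (4 * (r * Real.sin θ) * g (r * Real.sin θ)
      - 2 * Real.sqrt 2 / Real.sqrt π)) * h
  have hc1 : Continuous fun θ : ℝ =>
      Real.sin θ * g (r * Real.sin θ) - r * Real.cos θ ^ 2 * gd (r * Real.sin θ) :=
    ((Real.continuous_sin.mul
        (g_continuous.comp (continuous_const.mul Real.continuous_sin))).sub
      ((continuous_const.mul (Real.continuous_cos.pow 2)).mul
        (gd_continuous.comp (continuous_const.mul Real.continuous_sin))))
  have hc2 : Continuous fun θ : ℝ =>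
      4*r*(r * Real.sin θ * g (r * Real.sin θ)) - r * (2 * Real.sqrt 2 / Real.sqrt π) :=
    ((continuous_const.mul ((continuous_const.mul Real.continuous_sin).mul
        (g_continuous.comp (continuous_const.mul Real.continuous_sin)))).sub continuous_const)
  rw [intervalIntegral.integral_congr (g := fun θ =>
      (Real.sin θ * g (r * Real.sin θ) - r * Real.cos θ ^ 2 * gd (r * Real.sin θ))
        + (4*r*(r * Real.sin θ * g (r * Real.sin θ)) - r * (2 * Real.sqrt 2 / Real.sqrt π)))
      (fun θ _ => hsplit θ)]
  rw [intervalIntegral.integral_add (hc1.intervalIntegrable 0 (π/2))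
      (hc2.intervalIntegrable 0 (π/2))]
  have hFTC : (∫ θ in (0:ℝ)..(π/2),
      (Real.sin θ * g (r * Real.sin θ) - r * Real.cos θ ^ 2 * gd (r * Real.sin θ))) = 1 := by
    have hderiv : ∀ θ ∈ Set.uIcc (0:ℝ) (π/2),
        HasDerivAt (fun θ : ℝ => -Real.cos θ * g (r * Real.sin θ))
          (Real.sin θ * g (r * Real.sin θ) - r * Real.cos θ ^ 2 * gd (r * Real.sin θ)) θ := by
      intro θ _
      have hcos : HasDerivAt (fun θ : ℝ => -Real.cos θ) (Real.sin θ) θ := by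
        have := (Real.hasDerivAt_cos θ).neg; rwa [neg_neg] at this
      have hsin : HasDerivAt (fun θ : ℝ => r * Real.sin θ) (r * Real.cos θ) θ :=
        (Real.hasDerivAt_sin θ).const_mul r
      have hg : HasDerivAt (fun θ : ℝ => g (r * Real.sin θ))
          (gd (r * Real.sin θ) * (r * Real.cos θ)) θ := (g_hasDerivAt _).comp θ hsin
      have := hcos.mul hg
      refine this.congr_deriv ?_
      ring
    rw [intervalIntegral.integral_eq_sub_of_hasDerivAt hderiv
        (hc1.intervalIntegrable 0 (π/2))]
    simp [Real.cos_pi_div_two, g_zero]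
  rw [hFTC]
  rw [intervalIntegral.integral_sub
      ((Continuous.intervalIntegrable (by
        exact continuous_const.mul ((continuous_const.mul Real.continuous_sin).mul
          (g_continuous.comp (continuous_const.mul Real.continuous_sin)))) 0 (π/2)))
      intervalIntegrable_const]
  rw [intervalIntegral.integral_const_mul, intervalIntegral.integral_const]
  rw [J]
  have : (π/2 - 0) • (r * (2 * Real.sqrt 2 / Real.sqrt π)) = Real.sqrt (2*π) * r := by
    rw [smul_eq_mul, ← key_const]
    ring
  rw [this]
  ring

lemma J_hasDerivAt (r : ℝ) : HasDerivAt J (1 + 4*r*(J r) - Real.sqrt (2*π) * r) r := by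
  have := J_hasDerivAt' r
  rwa [integral_F'] at this

noncomputable def K (r : ℝ) : ℝ := Real.sqrt (2*π)/4 * (1 - g r)

lemma sqrt2pi_mul : Real.sqrt (2*π) * (2 * Real.sqrt 2 / Real.sqrt π) = 4 := by
  rw [mul_comm, key_const.symm]
  have h0 : Real.sqrt π ≠ 0 := by positivity
  have h2 : Real.sqrt 2 * Real.sqrt 2 = 2 := Real.mul_self_sqrt (by norm_num)
  field_simp
  nlinarith [h2, Real.sq_sqrt Real.pi_pos.le, Real.sqrt_nonneg π, Real.sqrt_nonneg 2]

lemma K_hasDerivAt (r : ℝ) : HasDerivAt K (1 + 4*r*(K r) - Real.sqrt (2*π) * r) r := by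
  have h := ((g_hasDerivAt r).const_sub 1).const_mul (Real.sqrt (2*π)/4)
  refine h.congr_deriv ?_
  rw [gd_def, K]
  linear_combination (1/4 : ℝ) * sqrt2pi_mul

lemma J_eq_K (r : ℝ) : J r = K r := by
  have hEderiv : ∀ x : ℝ,
      HasDerivAt (fun y : ℝ => (J y - K y) * Real.exp (-(2*y^2))) 0 x := by
    intro x
    have h1 := (J_hasDerivAt x).sub (K_hasDerivAt x)
    have hpow : HasDerivAt (fun y : ℝ => -(2*y^2)) (-(4*x)) x := by
      have := ((hasDerivAt_pow 2 x).const_mul (2:ℝ)).neg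
      exact this.congr_deriv (by push_cast; ring)
    have h2 : HasDerivAt (fun y : ℝ => Real.exp (-(2*y^2)))
        (Real.exp (-(2*x^2)) * (-(4*x))) x := hpow.exp
    have := h1.mul h2
    refine this.congr_deriv ?_
    simp only [Pi.sub_apply]
    ring
  have hconst := is_const_of_deriv_eq_zero (𝕜 := ℝ)
    (f := fun y : ℝ => (J y - K y) * Real.exp (-(2*y^2)))
    (fun x => (hEderiv x).differentiableAt) (fun x => (hEderiv x).deriv) r 0
  have hJ0 : J 0 = 0 := by simp [J]
  have hK0 : K 0 = 0 := by simp [K, g_zero]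
  rw [hJ0, hK0] at hconst
  simp only [sub_zero, sub_self, zero_mul] at hconst
  have hexp : Real.exp (-(2*r^2)) ≠ 0 := Real.exp_ne_zero _
  have := mul_eq_zero.mp hconst
  rcases this with h | h
  · linarith [sub_eq_zero.mp h]
  · exact absurd h hexp

end GinOE

theorem radial_density_complex_eigenvalues_GinOE (r : ℝ) (hr : 0 ≤ r) :
    (1 / Real.sqrt (2 * π)) * ∫ θ in (0:ℝ)..(2 * π),
        r * |Real.sin θ| * erfc (Real.sqrt 2 * (r * |Real.sin θ|))
          * Real.exp (2 * r ^ 2 * Real.sin θ ^ 2)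
      = 1 - Real.exp (2 * r ^ 2) * erfc (Real.sqrt 2 * r) := by
  set ψ : ℝ → ℝ := fun θ => r * |Real.sin θ| * erfc (Real.sqrt 2 * (r * |Real.sin θ|))
    * Real.exp (2 * r ^ 2 * Real.sin θ ^ 2) with hψ
  have hψcont : Continuous ψ := by
    apply Continuous.mul
    apply Continuous.mul
    · exact continuous_const.mul (continuous_abs.comp Real.continuous_sin)
    · exact GinOE.erfc_continuous.comp (continuous_const.mul
        (continuous_const.mul (continuous_abs.comp Real.continuous_sin)))
    · exact Real.continuous_exp.comp (continuous_const.mul (Real.continuous_sin.pow 2))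
  have hper : ∀ θ : ℝ, ψ (θ + π) = ψ θ := by
    intro θ
    simp [hψ, Real.sin_add_pi, abs_neg, neg_sq]
  have hsym : ∀ θ : ℝ, ψ (π - θ) = ψ θ := by
    intro θ
    simp [hψ, Real.sin_pi_sub]
  have i1 : (∫ θ in (π/2:ℝ)..π, ψ θ) = ∫ θ in (0:ℝ)..(π/2), ψ θ := by
    have h := intervalIntegral.integral_comp_sub_left (a := 0) (b := π/2) ψ π
    rw [intervalIntegral.integral_congr (g := ψ) (fun x _ => hsym x)] at h
    have e1 : π - π/2 = π/2 := by ring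
    rw [e1, sub_zero] at h
    exact h.symm
  have i2 : (∫ θ in (π:ℝ)..(2*π), ψ θ) = ∫ θ in (0:ℝ)..π, ψ θ := by
    have h := intervalIntegral.integral_comp_add_right (a := 0) (b := π) ψ π
    rw [intervalIntegral.integral_congr (g := ψ) (fun x _ => hper x)] at h
    have e1 : π + π = 2*π := by ring
    rw [zero_add, e1] at h
    exact h.symm
  have i3 : (∫ θ in (0:ℝ)..(2*π), ψ θ) = 4 * ∫ θ in (0:ℝ)..(π/2), ψ θ := by
    rw [← intervalIntegral.integral_add_adjacent_intervals (a := (0:ℝ)) (b := π) (c := 2*π)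
      (hψcont.intervalIntegrable _ _) (hψcont.intervalIntegrable _ _), i2,
      ← intervalIntegral.integral_add_adjacent_intervals (a := (0:ℝ)) (b := π/2) (c := π)
      (hψcont.intervalIntegrable _ _) (hψcont.intervalIntegrable _ _), i1]
    ring
  have i4 : (∫ θ in (0:ℝ)..(π/2), ψ θ) = GinOE.J r := by
    apply intervalIntegral.integral_congr
    intro θ hθ
    rw [Set.uIcc_of_le (by positivity : (0:ℝ) ≤ π/2)] at hθ
    have hsin : 0 ≤ Real.sin θ :=
      Real.sin_nonneg_of_nonneg_of_le_pi hθ.1 (le_trans hθ.2 (by linarith [Real.pi_pos]))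
    simp only [hψ, abs_of_nonneg hsin, GinOE.g]
    have h2 : (2:ℝ) * r ^ 2 * Real.sin θ ^ 2 = 2 * (r * Real.sin θ) ^ 2 := by ring
    rw [h2]
    ring
  have h2π : Real.sqrt (2*π) ≠ 0 := by
    have := Real.pi_pos
    positivity
  rw [i3, i4, GinOE.J_eq_K, GinOE.K]
  have : Real.exp (2 * r ^ 2) * erfc (Real.sqrt 2 * r) = GinOE.g r := rfl
  rw [this]
  field_simp
end

section
/- lim_{N→∞} (1/√N) · ∫₀^{√N} r · e^{2r²} · erfc(√2 · r) · Q(N-1, r²) dr = 1/√(2π). (This asymptotic controls the correction term in the expected number of complex eigenvalues of the real Ginibre ensemble inside the limiting support.) -/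
open MeasureTheory Real Filter

open Set


lemma gauss_integrableOn (x : ℝ) : IntegrableOn (fun t : ℝ => Real.exp (-t ^ 2)) (Ioi x) := by
  have h : Integrable (fun t : ℝ => Real.exp (-(1:ℝ) * t ^ 2)) := integrable_exp_neg_mul_sq one_pos
  simpa using h.integrableOn

lemma gauss_tail_aux {x : ℝ} (hx : 0 < x) :
    ∫ t in Ioi x, (Real.exp (-t ^ 2) * (1 + 1 / (2 * t ^ 2))) = Real.exp (-x ^ 2) / (2 * x) := by
  have key : ∀ t ∈ Ici x, HasDerivAt (fun t : ℝ => -Real.exp (-t ^ 2) / (2 * t))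
      (Real.exp (-t ^ 2) * (1 + 1 / (2 * t ^ 2))) t := by
    intro t ht
    have ht0 : t ≠ 0 := by have := lt_of_lt_of_le hx ht; positivity
    have h1 : HasDerivAt (fun t : ℝ => -Real.exp (-t ^ 2)) (2 * t * Real.exp (-t ^ 2)) t := by
      have h0 := ((hasDerivAt_pow 2 t).neg.exp).neg
      refine h0.congr_deriv ?_
      simp [pow_one]
      ring
    have h2 : HasDerivAt (fun t : ℝ => 2 * t) 2 t := by
      simpa using (hasDerivAt_id t).const_mul 2
    have := h1.div h2 (by simpa using ht0)
    refine this.congr_deriv ?_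
    field_simp
    ring
  have hint : IntegrableOn (fun t : ℝ => Real.exp (-t ^ 2) * (1 + 1 / (2 * t ^ 2))) (Ioi x) := by
    refine Integrable.mono' ((gauss_integrableOn x).const_mul (1 + 1 / (2 * x ^ 2))) ?_ ?_
    · refine (ContinuousOn.aestronglyMeasurable ?_ measurableSet_Ioi)
      refine ContinuousOn.mul (by fun_prop) ?_
      refine ContinuousOn.add continuousOn_const ?_
      refine ContinuousOn.div continuousOn_const (by fun_prop) ?_
      intro t ht
      have : 0 < t := lt_trans hx ht
      positivity
    · refine (ae_restrict_iff' measurableSet_Ioi).2 (Eventually.of_forall ?_)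
      intro t ht
      have htx : 0 < t := lt_trans hx ht
      rw [norm_mul, Real.norm_eq_abs, Real.norm_eq_abs, abs_of_pos (Real.exp_pos _),
        abs_of_pos (by positivity)]
      have hle : 1 / (2 * t ^ 2) ≤ 1 / (2 * x ^ 2) := by
        apply one_div_le_one_div_of_le (by positivity)
        have : x ≤ t := le_of_lt ht
        nlinarith
      nlinarith [Real.exp_pos (-t ^ 2)]
  have hlim : Tendsto (fun t : ℝ => -Real.exp (-t ^ 2) / (2 * t)) atTop (nhds 0) := by
    have h1 : Tendsto (fun t : ℝ => Real.exp (-t ^ 2)) atTop (nhds 0) := by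
      apply Real.tendsto_exp_atBot.comp
      apply tendsto_neg_atBot_iff.mpr
      exact tendsto_pow_atTop (by norm_num)
    have h2 : Tendsto (fun t : ℝ => (2 * t)⁻¹) atTop (nhds 0) := by
      apply Tendsto.inv_tendsto_atTop
      exact (tendsto_id.const_mul_atTop two_pos)
    have := (h1.neg.mul h2)
    simpa [div_eq_mul_inv] using this
  have := integral_Ioi_of_hasDerivAt_of_tendsto' key hint hlim
  rw [this]
  field_simp
  ring

lemma erfc_eq_tail {x : ℝ} (hx : 0 ≤ x) :
    erfc x = (2 / Real.sqrt π) * ∫ t in Ioi x, Real.exp (-t ^ 2) := by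
  have hsplit : (∫ t in Ioc 0 x, Real.exp (-t ^ 2)) + (∫ t in Ioi x, Real.exp (-t ^ 2))
      = ∫ t in Ioi 0, Real.exp (-t ^ 2) := by
    rw [← setIntegral_union (Ioc_disjoint_Ioi le_rfl) measurableSet_Ioi
      ((gauss_integrableOn 0).mono_set Ioc_subset_Ioi_self) (gauss_integrableOn x)]
    rw [Ioc_union_Ioi_eq_Ioi hx]
  have htot : (∫ t in Ioi (0:ℝ), Real.exp (-t ^ 2)) = Real.sqrt π / 2 := by
    have := integral_gaussian_Ioi 1
    simpa using this
  have hiv : (∫ t in (0:ℝ)..x, Real.exp (-t ^ 2)) = ∫ t in Ioc 0 x, Real.exp (-t ^ 2) :=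
    intervalIntegral.integral_of_le hx
  have hπ : Real.sqrt π ≠ 0 := by positivity
  rw [erfc, erf, hiv]
  have h1 : (∫ t in Ioc 0 x, Real.exp (-t ^ 2)) = Real.sqrt π / 2 - ∫ t in Ioi x, Real.exp (-t ^ 2) := by
    rw [← htot, ← hsplit]; ring
  rw [h1]
  field_simp
  ring

lemma erfc_le {x : ℝ} (hx : 0 < x) :
    erfc x ≤ (2 / Real.sqrt π) * (Real.exp (-x ^ 2) / (2 * x)) := by
  rw [erfc_eq_tail hx.le]
  have hπ : (0:ℝ) < 2 / Real.sqrt π := by positivity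
  apply mul_le_mul_of_nonneg_left _ hπ.le
  rw [← gauss_tail_aux hx]
  apply setIntegral_mono_on (gauss_integrableOn x) _ measurableSet_Ioi
  · intro t ht
    have htx : 0 < t := lt_trans hx ht
    have h0 : 0 < 1 / (2 * t ^ 2) := by positivity
    nlinarith [Real.exp_pos (-t ^ 2)]
  · refine Integrable.mono' ((gauss_integrableOn x).const_mul (1 + 1 / (2 * x ^ 2))) ?_ ?_
    · refine (ContinuousOn.aestronglyMeasurable ?_ measurableSet_Ioi)
      refine ContinuousOn.mul (by fun_prop) ?_
      refine ContinuousOn.add continuousOn_const ?_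
      refine ContinuousOn.div continuousOn_const (by fun_prop) ?_
      intro t ht
      have : 0 < t := lt_trans hx ht
      positivity
    · refine (ae_restrict_iff' measurableSet_Ioi).2 (Eventually.of_forall ?_)
      intro t ht
      have htx : 0 < t := lt_trans hx ht
      rw [norm_mul, Real.norm_eq_abs, Real.norm_eq_abs, abs_of_pos (Real.exp_pos _),
        abs_of_pos (by positivity)]
      have hle : 1 / (2 * t ^ 2) ≤ 1 / (2 * x ^ 2) := by
        apply one_div_le_one_div_of_le (by positivity)
        have : x ≤ t := le_of_lt ht
        nlinarith
      nlinarith [Real.exp_pos (-t ^ 2)]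

lemma erfc_ge {x : ℝ} (hx : 0 < x) :
    (2 / Real.sqrt π) * (Real.exp (-x ^ 2) * x / (2 * x ^ 2 + 1)) ≤ erfc x := by
  rw [erfc_eq_tail hx.le]
  have hπ : (0:ℝ) < 2 / Real.sqrt π := by positivity
  apply mul_le_mul_of_nonneg_left _ hπ.le
  -- (1 + 1/(2x²)) * I ≥ exp(-x²)/(2x)
  have hIge : Real.exp (-x ^ 2) / (2 * x) ≤
      (1 + 1 / (2 * x ^ 2)) * ∫ t in Ioi x, Real.exp (-t ^ 2) := by
    rw [← gauss_tail_aux hx, ← integral_const_mul]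
    apply setIntegral_mono_on _ ((gauss_integrableOn x).const_mul _) measurableSet_Ioi
    · intro t ht
      have htx : 0 < t := lt_trans hx ht
      have hle : 1 / (2 * t ^ 2) ≤ 1 / (2 * x ^ 2) := by
        apply one_div_le_one_div_of_le (by positivity)
        have : x ≤ t := le_of_lt ht
        nlinarith
      nlinarith [Real.exp_pos (-t ^ 2)]
    · refine Integrable.mono' ((gauss_integrableOn x).const_mul (1 + 1 / (2 * x ^ 2))) ?_ ?_
      · refine (ContinuousOn.aestronglyMeasurable ?_ measurableSet_Ioi)
        refine ContinuousOn.mul (by fun_prop) ?_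
        refine ContinuousOn.add continuousOn_const ?_
        refine ContinuousOn.div continuousOn_const (by fun_prop) ?_
        intro t ht
        have : 0 < t := lt_trans hx ht
        positivity
      · refine (ae_restrict_iff' measurableSet_Ioi).2 (Eventually.of_forall ?_)
        intro t ht
        have htx : 0 < t := lt_trans hx ht
        rw [norm_mul, Real.norm_eq_abs, Real.norm_eq_abs, abs_of_pos (Real.exp_pos _),
          abs_of_pos (by positivity)]
        have hle : 1 / (2 * t ^ 2) ≤ 1 / (2 * x ^ 2) := by
          apply one_div_le_one_div_of_le (by positivity)
          have : x ≤ t := le_of_lt ht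
          nlinarith
        nlinarith [Real.exp_pos (-t ^ 2)]
  -- rearrange
  have h2x : (0:ℝ) < 1 + 1 / (2 * x ^ 2) := by positivity
  have h1 : Real.exp (-x ^ 2) * x / (2 * x ^ 2 + 1)
      = (Real.exp (-x ^ 2) / (2 * x)) / (1 + 1 / (2 * x ^ 2)) := by
    field_simp
  rw [h1, div_le_iff₀ h2x]
  calc Real.exp (-x ^ 2) / (2 * x) ≤ (1 + 1 / (2 * x ^ 2)) * ∫ t in Ioi x, Real.exp (-t ^ 2) := hIge
    _ = (∫ t in Ioi x, Real.exp (-t ^ 2)) * (1 + 1 / (2 * x ^ 2)) := mul_comm _ _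

lemma erfc_nonneg {x : ℝ} (hx : 0 ≤ x) : 0 ≤ erfc x := by
  rw [erfc_eq_tail hx]
  have : 0 ≤ ∫ t in Ioi x, Real.exp (-t ^ 2) :=
    setIntegral_nonneg measurableSet_Ioi (fun t _ => (Real.exp_pos _).le)
  positivity

lemma sqrt_two_pi_eq : Real.sqrt (2 * π) = Real.sqrt 2 * Real.sqrt π :=
  Real.sqrt_mul (by norm_num) π

lemma sq_sqrt2_mul {r : ℝ} : (Real.sqrt 2 * r) ^ 2 = 2 * r ^ 2 := by
  rw [mul_pow, Real.sq_sqrt (by norm_num : (0:ℝ) ≤ 2)]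

lemma g_le {r : ℝ} (hr : 0 < r) :
    r * Real.exp (2 * r ^ 2) * erfc (Real.sqrt 2 * r) ≤ 1 / Real.sqrt (2 * π) := by
  have hx : 0 < Real.sqrt 2 * r := by positivity
  have h := erfc_le hx
  rw [sq_sqrt2_mul] at h
  have h2 : r * Real.exp (2 * r ^ 2) * erfc (Real.sqrt 2 * r) ≤
      r * Real.exp (2 * r ^ 2) * ((2 / Real.sqrt π) * (Real.exp (-(2 * r ^ 2)) / (2 * (Real.sqrt 2 * r)))) :=
    mul_le_mul_of_nonneg_left h (by positivity)
  refine h2.trans_eq ?_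
  rw [sqrt_two_pi_eq, Real.exp_neg]
  have hE : Real.exp (2 * r ^ 2) ≠ 0 := Real.exp_ne_zero _
  have hπ : Real.sqrt π ≠ 0 := by positivity
  have h2' : Real.sqrt 2 ≠ 0 := by positivity
  field_simp

lemma g_ge {r : ℝ} (hr : 0 < r) :
    (1 / Real.sqrt (2 * π)) * (4 * r ^ 2 / (4 * r ^ 2 + 1)) ≤
      r * Real.exp (2 * r ^ 2) * erfc (Real.sqrt 2 * r) := by
  have hx : 0 < Real.sqrt 2 * r := by positivity
  have h := erfc_ge hx
  rw [sq_sqrt2_mul] at h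
  have h2 : r * Real.exp (2 * r ^ 2) *
      ((2 / Real.sqrt π) * (Real.exp (-(2 * r ^ 2)) * (Real.sqrt 2 * r) / (2 * (2 * r ^ 2) + 1))) ≤
      r * Real.exp (2 * r ^ 2) * erfc (Real.sqrt 2 * r) :=
    mul_le_mul_of_nonneg_left h (by positivity)
  refine le_trans (le_of_eq ?_) h2
  rw [sqrt_two_pi_eq, Real.exp_neg]
  have hE : Real.exp (2 * r ^ 2) ≠ 0 := Real.exp_ne_zero _
  have hπ : Real.sqrt π ≠ 0 := by positivity
  have h2' : Real.sqrt 2 ≠ 0 := by positivity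
  have h4 : (4:ℝ) * r ^ 2 + 1 ≠ 0 := by positivity
  have hs2 : Real.sqrt 2 * Real.sqrt 2 = 2 := Real.mul_self_sqrt (by norm_num)
  field_simp
  linear_combination (-8 * r ^ 2 - 2) * hs2

lemma tendsto_g :
    Tendsto (fun r : ℝ => r * Real.exp (2 * r ^ 2) * erfc (Real.sqrt 2 * r)) atTop
      (nhds (1 / Real.sqrt (2 * π))) := by
  have hlow : Tendsto (fun r : ℝ => (1 / Real.sqrt (2 * π)) * (4 * r ^ 2 / (4 * r ^ 2 + 1)))
      atTop (nhds (1 / Real.sqrt (2 * π))) := by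
    have h1 : Tendsto (fun r : ℝ => 4 * r ^ 2 / (4 * r ^ 2 + 1)) atTop (nhds 1) := by
      have h2 : Tendsto (fun r : ℝ => 1 - 1 / (4 * r ^ 2 + 1)) atTop (nhds (1 - 0)) := by
        apply tendsto_const_nhds.sub
        apply Tendsto.div_atTop tendsto_const_nhds
        apply tendsto_atTop_add_const_right
        exact (tendsto_pow_atTop (by norm_num)).const_mul_atTop (by norm_num)
      rw [show (1:ℝ) - 0 = 1 by ring] at h2
      apply h2.congr'
      filter_upwards [Ioi_mem_atTop (0:ℝ)] with r hr
      have : (4:ℝ) * r ^ 2 + 1 ≠ 0 := by positivity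
      field_simp
      ring
    simpa using tendsto_const_nhds.mul h1
  refine tendsto_of_tendsto_of_tendsto_of_le_of_le' hlow tendsto_const_nhds ?_ ?_
  · filter_upwards [Ioi_mem_atTop (0:ℝ)] with r hr
    exact g_ge hr
  · filter_upwards [Ioi_mem_atTop (0:ℝ)] with r hr
    exact g_le hr

lemma gammaInt_integrableOn {n : ℝ} (hn : 0 < n) :
    IntegrableOn (fun t : ℝ => t ^ (n - 1) * Real.exp (-t)) (Ioi 0) := by
  have := Real.GammaIntegral_convergent hn
  simpa [mul_comm] using this

lemma lowGamma_nonneg {n x : ℝ} (hx : 0 ≤ x) : 0 ≤ lowGamma n x := by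
  apply intervalIntegral.integral_nonneg hx
  intro t ht
  exact mul_nonneg (Real.rpow_nonneg ht.1 _) (Real.exp_pos _).le

lemma lowGamma_le_Gamma {n x : ℝ} (hn : 0 < n) (hx : 0 ≤ x) :
    lowGamma n x ≤ Real.Gamma n := by
  rw [lowGamma, intervalIntegral.integral_of_le hx]
  have hΓ : Real.Gamma n = ∫ t in Ioi (0:ℝ), t ^ (n - 1) * Real.exp (-t) := by
    rw [Real.Gamma_eq_integral hn]
    exact setIntegral_congr_fun measurableSet_Ioi (fun t _ => mul_comm _ _)
  rw [hΓ]
  apply setIntegral_mono_set (gammaInt_integrableOn hn)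
  · refine (ae_restrict_iff' measurableSet_Ioi).2 (Eventually.of_forall (fun t ht => ?_))
    exact mul_nonneg (Real.rpow_nonneg (le_of_lt ht) _) (Real.exp_pos _).le
  · exact HasSubset.Subset.eventuallyLE Ioc_subset_Ioi_self

lemma regP_nonneg {n x : ℝ} (hn : 0 < n) (hx : 0 ≤ x) : 0 ≤ regP n x :=
  mul_nonneg (inv_nonneg.2 (Real.Gamma_pos_of_pos hn).le) (lowGamma_nonneg hx)

lemma regP_le_one {n x : ℝ} (hn : 0 < n) (hx : 0 ≤ x) : regP n x ≤ 1 := by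
  have hΓ : 0 < Real.Gamma n := Real.Gamma_pos_of_pos hn
  rw [regP]
  calc (Real.Gamma n)⁻¹ * lowGamma n x ≤ (Real.Gamma n)⁻¹ * Real.Gamma n :=
        mul_le_mul_of_nonneg_left (lowGamma_le_Gamma hn hx) (inv_nonneg.2 hΓ.le)
    _ = 1 := inv_mul_cancel₀ hΓ.ne'

lemma integrand_mono {p t x : ℝ} (hp : 0 < p) (ht : 0 ≤ t) (htx : t ≤ x) (hxp : x ≤ p) :
    t ^ p * Real.exp (-t) ≤ x ^ p * Real.exp (-x) := by
  rcases eq_or_lt_of_le ht with h0 | h0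
  · rw [← h0, Real.zero_rpow hp.ne', zero_mul]
    have hx0 : 0 ≤ x := le_trans ht htx
    positivity
  · have hx0 : 0 < x := lt_of_lt_of_le h0 htx
    rw [Real.rpow_def_of_pos h0, Real.rpow_def_of_pos hx0, ← Real.exp_add, ← Real.exp_add]
    apply Real.exp_le_exp.mpr
    have hlog : Real.log t - Real.log x ≤ t / x - 1 := by
      have h := Real.log_le_sub_one_of_pos (div_pos h0 hx0)
      rwa [Real.log_div h0.ne' hx0.ne'] at h
    have hlog' : x * (Real.log t - Real.log x) ≤ t - x := by
      have := mul_le_mul_of_nonneg_left hlog hx0.le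
      calc x * (Real.log t - Real.log x) ≤ x * (t / x - 1) := this
        _ = t - x := by field_simp
    have hD : Real.log t - Real.log x ≤ 0 := by
      have := Real.log_le_log h0 htx
      linarith
    nlinarith

lemma lowGamma_le {n x : ℝ} (hp : 0 < n - 1) (hx : 0 ≤ x) (hnx : x ≤ n - 1) :
    lowGamma n x ≤ x * (x ^ (n - 1) * Real.exp (-x)) := by
  have hcont : Continuous (fun t : ℝ => t ^ (n - 1) * Real.exp (-t)) :=
    (Real.continuous_rpow_const hp.le).mul (by fun_prop)
  have h := intervalIntegral.integral_mono_on (μ := volume) hx (hcont.intervalIntegrable 0 x)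
    intervalIntegrable_const (g := fun _ => x ^ (n - 1) * Real.exp (-x))
    (fun t ht => integrand_mono hp ht.1 ht.2 hnx)
  rw [lowGamma]
  calc (∫ t in (0:ℝ)..x, t ^ (n - 1) * Real.exp (-t))
      ≤ ∫ _ in (0:ℝ)..x, x ^ (n - 1) * Real.exp (-x) := h
    _ = x * (x ^ (n - 1) * Real.exp (-x)) := by
        rw [intervalIntegral.integral_const, smul_eq_mul, sub_zero]

lemma tendsto_aux_pow {q : ℝ} (hq0 : 0 ≤ q) (hq1 : q < 1) :
    Tendsto (fun N : ℕ => (N : ℝ) * q ^ (N - 2)) atTop (nhds 0) := by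
  have base : Tendsto (fun m : ℕ => ((m : ℝ) + 2) * q ^ m) atTop (nhds 0) := by
    have h1 : Tendsto (fun m : ℕ => (m : ℝ) ^ 1 * q ^ m) atTop (nhds 0) :=
      tendsto_pow_const_mul_const_pow_of_lt_one 1 hq0 hq1
    have h2 : Tendsto (fun m : ℕ => 2 * q ^ m) atTop (nhds 0) := by
      simpa using (tendsto_pow_atTop_nhds_zero_of_lt_one hq0 hq1).const_mul 2
    have := h1.add h2
    simp only [add_zero] at this
    apply this.congr
    intro m
    ring
  have hcomp := base.comp (tendsto_sub_atTop_nat 2)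
  apply hcomp.congr'
  filter_upwards [eventually_ge_atTop 2] with N hN
  simp only [Function.comp_apply]
  congr 1
  have : ((N - 2 : ℕ) : ℝ) = (N : ℝ) - 2 := by
    push_cast [Nat.cast_sub hN]
    ring
  rw [this]
  ring

lemma chain_bound {c : ℝ} (hc0 : 0 < c) (hc1 : c < 1) (m : ℕ) (hm : 1 ≤ m)
    {x : ℝ} (hx : x = ((m : ℝ) + 2) * c) :
    ((m.factorial : ℝ))⁻¹ * (x * (x ^ m * Real.exp (-x))) ≤
      Real.exp 2 * c * (((m : ℝ) + 2) * (c * Real.exp (1 - c)) ^ m) := by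
  have hM : (0:ℝ) < m := by exact_mod_cast hm
  have hx0 : 0 < x := by rw [hx]; positivity
  have hfacpos : (0:ℝ) < m.factorial := by exact_mod_cast m.factorial_pos
  have hinv : ((m.factorial : ℝ))⁻¹ ≤ Real.exp m / (m : ℝ) ^ m := by
    rw [← one_div, div_le_div_iff₀ hfacpos (pow_pos hM m), one_mul]
    have h := Real.pow_div_factorial_le_exp (m:ℝ) hM.le m
    rw [div_le_iff₀ hfacpos] at h
    exact h
  have hpow : (((m : ℝ) + 2) / m) ^ m ≤ Real.exp 2 := by
    have h1 : ((m : ℝ) + 2) / m ≤ Real.exp (2 / m) := by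
      have h2 := Real.add_one_le_exp (2 / (m:ℝ))
      have h3 : ((m : ℝ) + 2) / m = 2 / m + 1 := by field_simp; ring
      rw [h3]; exact h2
    calc (((m : ℝ) + 2) / m) ^ m ≤ (Real.exp (2 / m)) ^ m :=
          pow_le_pow_left₀ (by positivity) h1 m
      _ = Real.exp (2 / m * m) := by rw [mul_comm, Real.exp_nat_mul]
      _ = Real.exp 2 := by congr 1; field_simp
  calc ((m.factorial : ℝ))⁻¹ * (x * (x ^ m * Real.exp (-x)))
      ≤ (Real.exp m / (m : ℝ) ^ m) * (x * (x ^ m * Real.exp (-x))) := by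
        apply mul_le_mul_of_nonneg_right hinv
        positivity
    _ = x * ((x / m) ^ m) * (Real.exp m * Real.exp (-x)) := by
        rw [div_pow]
        field_simp
    _ ≤ x * (c ^ m * Real.exp 2) * (Real.exp m * Real.exp (-x)) := by
        have heq : (x / m) ^ m = c ^ m * (((m : ℝ) + 2) / m) ^ m := by
          rw [← mul_pow]
          congr 1
          rw [hx]
          field_simp
        apply mul_le_mul_of_nonneg_right _ (by positivity)
        apply mul_le_mul_of_nonneg_left _ hx0.le
        rw [heq]
        exact mul_le_mul_of_nonneg_left hpow (by positivity)
    _ ≤ x * (c ^ m * Real.exp 2) * (Real.exp (1 - c)) ^ m := by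
        apply mul_le_mul_of_nonneg_left _ (by positivity)
        rw [← Real.exp_add, ← Real.exp_nat_mul]
        apply Real.exp_le_exp.2
        rw [hx]
        nlinarith
    _ = Real.exp 2 * c * (((m : ℝ) + 2) * (c * Real.exp (1 - c)) ^ m) := by
        rw [hx, mul_pow]
        ring

lemma regP_tendsto {c : ℝ} (hc0 : 0 < c) (hc1 : c < 1) :
    Tendsto (fun N : ℕ => regP ((N : ℝ) - 1) ((N : ℝ) * c)) atTop (nhds 0) := by
  set q := c * Real.exp (1 - c) with hq_def
  have hq0 : 0 ≤ q := by positivity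
  have hq1 : q < 1 := by
    have hlog : Real.log c < c - 1 := Real.log_lt_sub_one_of_pos hc0 hc1.ne
    have : c < Real.exp (c - 1) := by
      calc c = Real.exp (Real.log c) := (Real.exp_log hc0).symm
        _ < Real.exp (c - 1) := Real.exp_lt_exp.2 hlog
    calc q = c * Real.exp (1 - c) := rfl
      _ < Real.exp (c - 1) * Real.exp (1 - c) :=
          mul_lt_mul_of_pos_right this (Real.exp_pos _)
      _ = 1 := by rw [← Real.exp_add]; norm_num
  have hB : Tendsto (fun N : ℕ => Real.exp 2 * c * ((N : ℝ) * q ^ (N - 2))) atTop (nhds 0) := by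
    simpa using (tendsto_aux_pow hq0 hq1).const_mul (Real.exp 2 * c)
  refine squeeze_zero' ?_ ?_ hB
  · filter_upwards [eventually_ge_atTop 2] with N hN
    have hN1 : (2:ℝ) ≤ (N:ℝ) := by exact_mod_cast hN
    apply regP_nonneg
    · linarith
    · positivity
  · filter_upwards [eventually_ge_atTop 3, eventually_ge_atTop (⌈2 / (1 - c)⌉₊ + 2)]
      with N hN3 hNc2
    have h1c : (0:ℝ) < 1 - c := by linarith
    have hceil : (2 : ℝ) / (1 - c) ≤ (N : ℝ) := by
      refine le_trans (Nat.le_ceil _) ?_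
      exact_mod_cast Nat.le_of_add_right_le hNc2
    set m := N - 2 with hm_def
    have hmN : ((m : ℕ) : ℝ) = (N : ℝ) - 2 := by
      rw [hm_def, Nat.cast_sub (show 2 ≤ N by omega)]
      norm_num
    have hm1 : 1 ≤ m := by omega
    have hx_eq : (N : ℝ) * c = ((m : ℝ) + 2) * c := by rw [hmN]; ring
    have hx0 : (0:ℝ) ≤ (N : ℝ) * c := by positivity
    have hN3' : (3:ℝ) ≤ (N:ℝ) := by exact_mod_cast hN3
    have hxm : (N : ℝ) * c ≤ ((N : ℝ) - 1) - 1 := by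
      have h2 := (div_le_iff₀ h1c).1 hceil
      nlinarith
    have hp : 0 < ((N : ℝ) - 1) - 1 := by linarith
    have hΓ : Real.Gamma ((N : ℝ) - 1) = (m.factorial : ℝ) := by
      have he : (N : ℝ) - 1 = (m : ℝ) + 1 := by rw [hmN]; ring
      rw [he, Real.Gamma_nat_eq_factorial]
    have hrpow : ((N : ℝ) * c) ^ (((N : ℝ) - 1) - 1) = ((N : ℝ) * c) ^ m := by
      have he : ((N : ℝ) - 1) - 1 = ((m : ℕ) : ℝ) := by rw [hmN]; ring
      rw [he, Real.rpow_natCast]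
    have hb := lowGamma_le hp hx0 hxm
    rw [hrpow] at hb
    have hchain := chain_bound hc0 hc1 m hm1 hx_eq
    calc regP ((N : ℝ) - 1) ((N : ℝ) * c)
        = (Real.Gamma ((N : ℝ) - 1))⁻¹ * lowGamma ((N : ℝ) - 1) ((N : ℝ) * c) := rfl
      _ ≤ ((m.factorial : ℝ))⁻¹ *
          ((N : ℝ) * c * (((N : ℝ) * c) ^ m * Real.exp (-((N : ℝ) * c)))) := by
          rw [hΓ]
          exact mul_le_mul_of_nonneg_left hb (by positivity)
      _ ≤ Real.exp 2 * c * (((m : ℝ) + 2) * (c * Real.exp (1 - c)) ^ m) := hchain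
      _ = Real.exp 2 * c * ((N : ℝ) * q ^ (N - 2)) := by
          have : (c * Real.exp (1 - c)) ^ m = q ^ (N - 2) := rfl
          rw [this, hmN]
          ring


lemma continuous_erfc : Continuous erfc := by
  unfold erfc erf
  apply continuous_const.sub
  apply Continuous.mul continuous_const
  exact intervalIntegral.continuous_primitive
    (fun a b => Continuous.intervalIntegrable (by fun_prop) a b) 0

lemma continuous_lowGamma {n : ℝ} (h : 0 ≤ n - 1) : Continuous (lowGamma n) := by
  unfold lowGamma
  exact intervalIntegral.continuous_primitive
    (fun a b => ((Real.continuous_rpow_const h).mul (by fun_prop)).intervalIntegrable a b) 0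

theorem correction_term_complex_eigenvalues_GinOE :
    Tendsto (fun N : ℕ => (1 / Real.sqrt N) *
        ∫ r in (0:ℝ)..Real.sqrt N,
          r * Real.exp (2 * r ^ 2) * erfc (Real.sqrt 2 * r) * regQ ((N : ℝ) - 1) (r ^ 2))
      atTop (nhds (1 / Real.sqrt (2 * π))) := by
  have hsqrt_atTop : Tendsto (fun N : ℕ => Real.sqrt N) atTop atTop := by
    have h1 : Tendsto Real.sqrt atTop atTop := by
      rw [tendsto_atTop_atTop]
      intro b
      refine ⟨(max b 0) ^ 2, fun a ha => ?_⟩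
      calc b ≤ max b 0 := le_max_left b 0
        _ = Real.sqrt ((max b 0) ^ 2) := (Real.sqrt_sq (le_max_right b 0)).symm
        _ ≤ Real.sqrt a := Real.sqrt_le_sqrt ha
    exact h1.comp tendsto_natCast_atTop_atTop
  have key : Tendsto (fun N : ℕ => ∫ s in (0:ℝ)..1,
      (Real.sqrt N * s) * Real.exp (2 * (Real.sqrt N * s) ^ 2) *
        erfc (Real.sqrt 2 * (Real.sqrt N * s)) *
        regQ ((N : ℝ) - 1) ((Real.sqrt N * s) ^ 2)) atTop
        (nhds (1 / Real.sqrt (2 * π))) := by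
    have hconst : (1 / Real.sqrt (2 * π) : ℝ)
        = ∫ s in (0:ℝ)..1, (fun _ : ℝ => (1 / Real.sqrt (2 * π) : ℝ)) s := by simp
    rw [hconst]
    apply intervalIntegral.tendsto_integral_filter_of_dominated_convergence
      (bound := fun _ => (1 / Real.sqrt (2 * π) : ℝ))
    · filter_upwards [eventually_ge_atTop 2] with N hN
      have h2 : (2:ℝ) ≤ (N:ℝ) := by exact_mod_cast hN
      have hn : (0:ℝ) ≤ ((N : ℝ) - 1) - 1 := by linarith
      have hbase : Continuous (fun s : ℝ => Real.sqrt N * s) := continuous_const.mul continuous_id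
      have hQ : Continuous (fun s : ℝ => regQ ((N : ℝ) - 1) ((Real.sqrt N * s) ^ 2)) := by
        unfold regQ regP
        exact continuous_const.sub
          (continuous_const.mul ((continuous_lowGamma hn).comp (hbase.pow 2)))
      exact (((hbase.mul (by fun_prop)).mul
        (continuous_erfc.comp (continuous_const.mul hbase))).mul hQ).aestronglyMeasurable
    · filter_upwards [eventually_ge_atTop 2] with N hN
      refine Eventually.of_forall (fun s hs => ?_)
      rw [Set.uIoc_of_le (by norm_num : (0:ℝ) ≤ 1)] at hs
      have hN2 : (2:ℝ) ≤ (N:ℝ) := by exact_mod_cast hN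
      have hr : 0 < Real.sqrt N * s := by
        have h0 : 0 < Real.sqrt (N:ℝ) := Real.sqrt_pos.2 (by linarith)
        exact mul_pos h0 hs.1
      set r := Real.sqrt N * s with hr_def
      have hn0 : (0:ℝ) < (N : ℝ) - 1 := by linarith
      have hx2 : (0:ℝ) ≤ r ^ 2 := sq_nonneg r
      have hQ0 : 0 ≤ regQ ((N : ℝ) - 1) (r ^ 2) := by
        have := regP_le_one hn0 hx2
        unfold regQ
        linarith
      have hQ1 : regQ ((N : ℝ) - 1) (r ^ 2) ≤ 1 := by
        have := regP_nonneg hn0 hx2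
        unfold regQ
        linarith
      have hg0 : 0 ≤ r * Real.exp (2 * r ^ 2) * erfc (Real.sqrt 2 * r) :=
        mul_nonneg (by positivity) (erfc_nonneg (by positivity))
      rw [Real.norm_eq_abs, abs_of_nonneg (mul_nonneg hg0 hQ0)]
      calc r * Real.exp (2 * r ^ 2) * erfc (Real.sqrt 2 * r) * regQ ((N : ℝ) - 1) (r ^ 2)
          ≤ r * Real.exp (2 * r ^ 2) * erfc (Real.sqrt 2 * r) * 1 :=
            mul_le_mul_of_nonneg_left hQ1 hg0
        _ = r * Real.exp (2 * r ^ 2) * erfc (Real.sqrt 2 * r) := mul_one _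
        _ ≤ 1 / Real.sqrt (2 * π) := g_le hr
    · exact intervalIntegrable_const
    · have h1 : ∀ᵐ s : ℝ, s ≠ (1:ℝ) := by
        rw [ae_iff]
        simp only [ne_eq, not_not]
        simpa using measure_singleton (1 : ℝ)
      filter_upwards [h1] with s hne hs
      rw [Set.uIoc_of_le (by norm_num : (0:ℝ) ≤ 1)] at hs
      have hs0 : 0 < s := hs.1
      have hs1 : s < 1 := lt_of_le_of_ne hs.2 hne
      have hrs : Tendsto (fun N : ℕ => Real.sqrt N * s) atTop atTop :=
        hsqrt_atTop.atTop_mul_const hs0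
      have hg : Tendsto (fun N : ℕ => (Real.sqrt N * s) * Real.exp (2 * (Real.sqrt N * s) ^ 2) *
          erfc (Real.sqrt 2 * (Real.sqrt N * s))) atTop (nhds (1 / Real.sqrt (2 * π))) :=
        tendsto_g.comp hrs
      have hc0 : (0:ℝ) < s ^ 2 := by positivity
      have hc1 : s ^ 2 < 1 := by nlinarith
      have hq : Tendsto (fun N : ℕ => regQ ((N : ℝ) - 1) ((N:ℝ) * s ^ 2)) atTop (nhds 1) := by
        have h0 := regP_tendsto hc0 hc1
        have h2 := (tendsto_const_nhds (x := (1:ℝ)) (f := (atTop : Filter ℕ))).sub h0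
        rw [sub_zero] at h2
        exact h2.congr (fun N => rfl)
      have hmul := hg.mul hq
      rw [mul_one] at hmul
      apply hmul.congr
      intro N
      have hsq : (Real.sqrt N * s) ^ 2 = (N : ℝ) * s ^ 2 := by
        rw [mul_pow, Real.sq_sqrt (Nat.cast_nonneg N)]
      rw [hsq]
  refine key.congr' ?_
  filter_upwards [eventually_ge_atTop 1] with N hN
  have hsN : (0:ℝ) < Real.sqrt N := Real.sqrt_pos.2 (by exact_mod_cast hN)
  have hcm := intervalIntegral.integral_comp_mul_left (a := (0:ℝ)) (b := (1:ℝ))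
    (fun r => r * Real.exp (2 * r ^ 2) * erfc (Real.sqrt 2 * r) * regQ ((N : ℝ) - 1) (r ^ 2))
    hsN.ne'
  simp only [mul_zero, mul_one] at hcm
  rw [hcm, smul_eq_mul, one_div]
end

section
/- For every R ≥ 0, (1/π) · ∫_{{(x,y) ∈ ℝ² : x² + y² ≤ R²}} 4 y F(2y) dx dy = R² - 1/4 + (1/4) e^{-4R²}, where F is Dawson's integral. (The integrand 4yF(2y) is the limiting eigenvalue density of the symplectic Ginibre ensemble at the origin, and the identity evaluates the expected number of eigenvalues in the disc of radius R.) -/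
open MeasureTheory Real Filter Set

/-- Dawson's integral `F(z) = e^(-z²) ∫₀^z e^(t²) dt`. -/
noncomputable def dawson (z : ℝ) : ℝ := Real.exp (-z ^ 2) * ∫ t in (0:ℝ)..z, Real.exp (t ^ 2)

@[continuity, fun_prop]
lemma continuous_dawson : Continuous dawson := by
  apply Continuous.mul (by continuity)
  exact intervalIntegral.continuous_primitive
    (fun a b => (continuous_exp.comp (by continuity)).intervalIntegrable a b) 0

lemma hasDerivAt_dawson (z : ℝ) : HasDerivAt dawson (1 - 2*z*dawson z) z := by
  have hP : HasDerivAt (fun u => ∫ t in (0:ℝ)..u, Real.exp (t ^ 2)) (Real.exp (z^2)) z := by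
    apply intervalIntegral.integral_hasDerivAt_right
    · exact ((continuous_exp.comp (by continuity)).intervalIntegrable 0 z)
    · exact (continuous_exp.comp (by continuity)).stronglyMeasurableAtFilter _ _
    · exact (continuous_exp.comp (by continuity)).continuousAt
  have hE : HasDerivAt (fun u : ℝ => Real.exp (-u^2)) (-2*z*Real.exp (-z^2)) z := by
    have h1 : HasDerivAt (fun u : ℝ => -u^2) (-2*z) z := by
      have := (hasDerivAt_pow 2 z).fun_neg
      simpa using this.congr_deriv (by ring)
    simpa [mul_comm] using h1.exp
  have h : HasDerivAt (fun u : ℝ => Real.exp (-u^2) * ∫ t in (0:ℝ)..u, Real.exp (t ^ 2)) _ z :=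
    hE.fun_mul hP
  convert h using 1
  · rfl
  unfold dawson
  rw [← Real.exp_add]
  ring_nf
  simp; ring

lemma dawson_neg (z : ℝ) : dawson (-z) = - dawson z := by
  unfold dawson
  have h := intervalIntegral.integral_comp_neg (a := (0:ℝ)) (b := -z) (fun t => Real.exp (t ^ 2))
  simp only [neg_sq, neg_zero, neg_neg] at h
  rw [neg_sq, h, intervalIntegral.integral_symm]
  ring

/-- antiderivative evaluation of the inner integral -/
lemma inner_eval (s : ℝ) :
    ∫ y in (-s)..s, 4 * y * dawson (2 * y) = 2 * s - dawson (2 * s) := by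
  have hderiv : ∀ y ∈ Set.uIcc (-s) s,
      HasDerivAt (fun y => y - dawson (2 * y) / 2) (4 * y * dawson (2 * y)) y := by
    intro y _
    have hin : HasDerivAt (fun y : ℝ => 2 * y) 2 y := by
      simpa using (hasDerivAt_id y).const_mul 2
    have hcomp : HasDerivAt (fun y => dawson (2 * y))
        ((1 - 2 * (2 * y) * dawson (2 * y)) * 2) y :=
      (hasDerivAt_dawson (2 * y)).comp y hin
    have := (hasDerivAt_id y).sub (hcomp.div_const 2)
    exact this.congr_deriv (by ring)
  rw [intervalIntegral.integral_eq_sub_of_hasDerivAt hderiv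
    (Continuous.intervalIntegrable (by continuity) _ _)]
  rw [show 2 * (-s) = -(2 * s) by ring, dawson_neg]
  ring

/-- expansion of dawson(2s) as an even integral -/
lemma dawson_two_eq (s : ℝ) :
    dawson (2 * s) = Real.exp (-(2*s) ^ 2) * ∫ u in (-s)..s, Real.exp (4 * u ^ 2) := by
  unfold dawson
  congr 1
  have h1 : (∫ x in (0:ℝ)..s, Real.exp ((2 * x) ^ 2))
      = (2:ℝ)⁻¹ * ∫ t in (0:ℝ)..(2*s), Real.exp (t ^ 2) := by
    simpa using intervalIntegral.integral_comp_mul_left (a := 0) (b := s)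
      (fun t => Real.exp (t ^ 2)) (two_ne_zero)
  have h2 : (∫ x in (0:ℝ)..s, Real.exp ((2 * x) ^ 2))
      = ∫ x in (0:ℝ)..s, Real.exp (4 * x ^ 2) := by
    apply intervalIntegral.integral_congr
    intro x _
    simp only [mul_pow]; norm_num
  have h3 : (∫ u in (-s)..(0:ℝ), Real.exp (4 * u ^ 2))
      = ∫ u in (0:ℝ)..s, Real.exp (4 * u ^ 2) := by
    have h := intervalIntegral.integral_comp_neg (a := (0:ℝ)) (b := s)
      (fun u => Real.exp (4 * u ^ 2))
    simp only [neg_sq, neg_zero] at h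
    exact h.symm
  have h4 : (∫ u in (-s)..s, Real.exp (4 * u ^ 2))
      = (∫ u in (-s)..(0:ℝ), Real.exp (4 * u ^ 2)) + ∫ u in (0:ℝ)..s, Real.exp (4 * u ^ 2) :=
    (intervalIntegral.integral_add_adjacent_intervals
      (Continuous.intervalIntegrable (by continuity) _ _)
      (Continuous.intervalIntegrable (by continuity) _ _)).symm
  rw [h4, h3, ← h2, h1]
  ring


lemma measurableSet_disc (R : ℝ) : MeasurableSet {p : ℝ × ℝ | p.1 ^ 2 + p.2 ^ 2 ≤ R ^ 2} :=
  measurableSet_le (by fun_prop) (by fun_prop)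

lemma isCompact_disc (R : ℝ) : IsCompact {p : ℝ × ℝ | p.1 ^ 2 + p.2 ^ 2 ≤ R ^ 2} := by
  have hclosed : IsClosed {p : ℝ × ℝ | p.1 ^ 2 + p.2 ^ 2 ≤ R ^ 2} :=
    isClosed_le (by fun_prop) continuous_const
  have hsub : {p : ℝ × ℝ | p.1 ^ 2 + p.2 ^ 2 ≤ R ^ 2}
      ⊆ (Set.Icc (-|R|) |R|) ×ˢ (Set.Icc (-|R|) |R|) := by
    rintro ⟨a, b⟩ h
    simp only [Set.mem_setOf_eq] at h
    have hR2 : R ^ 2 = |R| ^ 2 := (sq_abs R).symm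
    refine ⟨⟨?_, ?_⟩, ?_, ?_⟩ <;>
      nlinarith [sq_nonneg a, sq_nonneg b, abs_nonneg R, sq_nonneg (a - |R|),
        sq_nonneg (a + |R|), sq_nonneg (b - |R|), sq_nonneg (b + |R|)]
  exact (isCompact_Icc.prod isCompact_Icc).of_isClosed_subset hclosed hsub

lemma disc_fubini (R : ℝ) (hR : 0 ≤ R) (g : ℝ × ℝ → ℝ) (hg : Continuous g) :
    ∫ p in {p : ℝ × ℝ | p.1 ^ 2 + p.2 ^ 2 ≤ R ^ 2}, g p
      = ∫ x in (-R)..R, ∫ y in (-Real.sqrt (R^2 - x^2))..(Real.sqrt (R^2 - x^2)), g (x, y) := by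
  set D := {p : ℝ × ℝ | p.1 ^ 2 + p.2 ^ 2 ≤ R ^ 2} with hD
  have hDm := measurableSet_disc R
  have hInt : IntegrableOn g D := hg.continuousOn.integrableOn_compact (isCompact_disc R)
  have hInd : Integrable (D.indicator g) := (integrable_indicator_iff hDm).2 hInt
  have h1 : ∫ p in D, g p = ∫ p, D.indicator g p := (integral_indicator hDm).symm
  have h2 : ∫ p, D.indicator g p = ∫ x, ∫ y, D.indicator g (x, y) := by
    rw [MeasureTheory.Measure.volume_eq_prod] at hInd ⊢
    exact (MeasureTheory.integral_integral (f := fun x y => D.indicator g (x, y)) hInd).symm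
  have h3 : ∀ x : ℝ, (∫ y, D.indicator g (x, y))
      = ∫ y in (-Real.sqrt (R^2 - x^2))..(Real.sqrt (R^2 - x^2)), g (x, y) := by
    intro x
    by_cases hx : x ^ 2 ≤ R ^ 2
    · set s := Real.sqrt (R ^ 2 - x ^ 2) with hs
      have hs0 : 0 ≤ s := Real.sqrt_nonneg _
      have hs2 : s ^ 2 = R ^ 2 - x ^ 2 := Real.sq_sqrt (by linarith)
      have heq : (fun y => D.indicator g (x, y))
          = (Set.Icc (-s) s).indicator (fun y => g (x, y)) := by
        funext y
        have hcond : ((x, y) ∈ D) ↔ y ∈ Set.Icc (-s) s := by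
          simp only [hD, Set.mem_setOf_eq, Set.mem_Icc]
          constructor
          · intro h
            constructor <;> nlinarith [sq_nonneg (y - s), sq_nonneg (y + s)]
          · rintro ⟨h1', h2'⟩
            nlinarith
        by_cases hm : (x, y) ∈ D
        · rw [Set.indicator_of_mem hm, Set.indicator_of_mem (hcond.1 hm)]
        · rw [Set.indicator_of_notMem hm, Set.indicator_of_notMem (fun hc => hm (hcond.2 hc))]
      rw [heq, MeasureTheory.integral_indicator measurableSet_Icc,
        MeasureTheory.integral_Icc_eq_integral_Ioc,
        ← intervalIntegral.integral_of_le (by linarith)]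
    · have hsz : Real.sqrt (R ^ 2 - x ^ 2) = 0 :=
        Real.sqrt_eq_zero_of_nonpos (by linarith)
      have hz : (fun y => D.indicator g (x, y)) = fun _ => (0:ℝ) := by
        funext y
        apply Set.indicator_of_notMem
        simp only [hD, Set.mem_setOf_eq]
        push_neg
        nlinarith [sq_nonneg y]
      rw [hz, hsz, neg_zero, intervalIntegral.integral_same, integral_zero]
  have h4 : ∫ x, ∫ y, D.indicator g (x, y)
      = ∫ x in (-R)..R, ∫ y in (-Real.sqrt (R^2 - x^2))..(Real.sqrt (R^2 - x^2)), g (x, y) := by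
    have hfun : (fun x => ∫ y, D.indicator g (x, y))
        = (Set.Icc (-R) R).indicator
            (fun x => ∫ y in (-Real.sqrt (R^2 - x^2))..(Real.sqrt (R^2 - x^2)), g (x, y)) := by
      funext x
      by_cases hx : x ∈ Set.Icc (-R) R
      · rw [Set.indicator_of_mem hx, h3 x]
      · rw [Set.indicator_of_notMem hx, h3 x]
        have hx2 : R ^ 2 < x ^ 2 := by
          simp only [Set.mem_Icc, not_and_or, not_le] at hx
          rcases hx with h | h
          · nlinarith
          · nlinarith
        have hsz : Real.sqrt (R ^ 2 - x ^ 2) = 0 :=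
          Real.sqrt_eq_zero_of_nonpos (by linarith)
        rw [hsz, neg_zero, intervalIntegral.integral_same]
    rw [hfun, MeasureTheory.integral_indicator measurableSet_Icc,
      MeasureTheory.integral_Icc_eq_integral_Ioc,
      ← intervalIntegral.integral_of_le (by linarith)]
  rw [h1, h2, h4]


lemma polarCoord_symm_apply' (p : ℝ × ℝ) :
    polarCoord.symm p = (p.1 * Real.cos p.2, p.1 * Real.sin p.2) := rfl

lemma polarCoord_target' : polarCoord.target = Set.Ioi (0:ℝ) ×ˢ Set.Ioo (-π) π := rfl

lemma radial_integrand_eq (R : ℝ) (hR : 0 ≤ R) :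
    ∀ p ∈ polarCoord.target,
      p.1 • ({p : ℝ × ℝ | p.1 ^ 2 + p.2 ^ 2 ≤ R ^ 2}.indicator
          (fun q => Real.exp (4 * (q.1 ^ 2 + q.2 ^ 2))) (polarCoord.symm p))
        = (Set.Ioc 0 R).indicator (fun r => r * Real.exp (4 * r ^ 2)) p.1 := by
  rintro ⟨r, θ⟩ hp
  rw [polarCoord_target'] at hp
  obtain ⟨hr, hθ⟩ : r ∈ Set.Ioi (0:ℝ) ∧ θ ∈ Set.Ioo (-π) π := by
    simpa [Set.mem_prod] using hp
  have hr' : (0:ℝ) < r := hr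
  rw [polarCoord_symm_apply']
  dsimp only
  have hnorm : (r * Real.cos θ) ^ 2 + (r * Real.sin θ) ^ 2 = r ^ 2 := by
    have h := Real.sin_sq_add_cos_sq θ
    nlinarith [h]
  have hmem : ((r * Real.cos θ, r * Real.sin θ) ∈
      {p : ℝ × ℝ | p.1 ^ 2 + p.2 ^ 2 ≤ R ^ 2}) ↔ r ∈ Set.Ioc 0 R := by
    simp only [Set.mem_setOf_eq, Set.mem_Ioc, hnorm]
    constructor
    · intro h; exact ⟨hr', by nlinarith⟩
    · rintro ⟨-, h⟩; nlinarith
  by_cases hle : r ∈ Set.Ioc 0 R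
  · rw [Set.indicator_of_mem (hmem.2 hle), Set.indicator_of_mem hle]
    dsimp only
    rw [hnorm, smul_eq_mul]
  · rw [Set.indicator_of_notMem (fun hc => hle (hmem.1 hc)), Set.indicator_of_notMem hle]
    simp

lemma disc_radial (R : ℝ) (hR : 0 ≤ R) :
    ∫ p in {p : ℝ × ℝ | p.1 ^ 2 + p.2 ^ 2 ≤ R ^ 2}, Real.exp (4 * (p.1 ^ 2 + p.2 ^ 2))
      = π * (Real.exp (4 * R ^ 2) - 1) / 4 := by
  have hDm : MeasurableSet {p : ℝ × ℝ | p.1 ^ 2 + p.2 ^ 2 ≤ R ^ 2} :=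
    measurableSet_le (by fun_prop) (by fun_prop)
  set g : ℝ × ℝ → ℝ := fun q => Real.exp (4 * (q.1 ^ 2 + q.2 ^ 2)) with hg
  set D := {p : ℝ × ℝ | p.1 ^ 2 + p.2 ^ 2 ≤ R ^ 2} with hD
  have h0 : ∫ p in D, g p = ∫ p, D.indicator g p := (integral_indicator hDm).symm
  rw [h0, ← integral_comp_polarCoord_symm (D.indicator g)]
  rw [setIntegral_congr_fun polarCoord.open_target.measurableSet (radial_integrand_eq R hR)]
  have h1 : ∫ p in polarCoord.target, (Set.Ioc 0 R).indicator (fun r => r * Real.exp (4 * r ^ 2)) p.1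
      = (∫ r in Set.Ioi (0:ℝ), (Set.Ioc 0 R).indicator (fun r => r * Real.exp (4 * r ^ 2)) r)
        * ∫ θ in Set.Ioo (-π) π, (1:ℝ) := by
    rw [polarCoord_target', MeasureTheory.Measure.volume_eq_prod]
    rw [← MeasureTheory.setIntegral_prod_mul]
    simp
  rw [h1]
  have h2 : (∫ r in Set.Ioi (0:ℝ), (Set.Ioc 0 R).indicator (fun r => r * Real.exp (4 * r ^ 2)) r)
      = (Real.exp (4 * R ^ 2) - 1) / 8 := by
    rw [setIntegral_indicator measurableSet_Ioc,
      Set.inter_eq_self_of_subset_right Set.Ioc_subset_Ioi_self,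
      ← intervalIntegral.integral_of_le hR]
    have hderiv : ∀ x ∈ Set.uIcc (0:ℝ) R,
        HasDerivAt (fun r => Real.exp (4 * r ^ 2) / 8) (x * Real.exp (4 * x ^ 2)) x := by
      intro x _
      have h1' : HasDerivAt (fun r : ℝ => 4 * r ^ 2) (8 * x) x := by
        simpa using ((hasDerivAt_pow 2 x).const_mul 4).congr_deriv (by ring)
      have := (h1'.exp).div_const 8
      simpa using this.congr_deriv (by ring)
    rw [intervalIntegral.integral_eq_sub_of_hasDerivAt hderiv
      ((Continuous.intervalIntegrable (by continuity) _ _))]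
    norm_num
    ring
  have h3 : (∫ θ in Set.Ioo (-π) π, (1:ℝ)) = 2 * π := by
    rw [setIntegral_const, Real.volume_real_Ioo_of_le (by linarith [Real.pi_pos]), smul_eq_mul,
      mul_one]
    ring
  rw [h2, h3]
  ring


lemma area_lemma (R : ℝ) (hR : 0 ≤ R) :
    ∫ x in (-R)..R, 2 * Real.sqrt (R^2 - x^2) = π * R^2 := by
  rcases eq_or_lt_of_le hR with h0 | h0
  · rw [← h0]; simp
  · have key : ∀ x : ℝ, 2 * Real.sqrt (R^2 - x^2)
        = (fun u => 2 * (R * Real.sqrt (1 - u^2))) (x / R) := by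
      intro x
      have h : R^2 - x^2 = R^2 * (1 - (x/R)^2) := by field_simp
      simp only [h, Real.sqrt_mul (sq_nonneg R), Real.sqrt_sq hR]
    rw [show (∫ x in (-R)..R, 2 * Real.sqrt (R^2 - x^2))
          = ∫ x in (-R)..R, (fun u => 2 * (R * Real.sqrt (1 - u^2))) (x / R) from
        intervalIntegral.integral_congr (fun x _ => key x),
      intervalIntegral.integral_comp_div (a := -R) (b := R) (fun u => 2 * (R * Real.sqrt (1 - u^2))) (ne_of_gt h0),
      neg_div, div_self (ne_of_gt h0)]
    simp_rw [show ∀ u : ℝ, 2 * (R * Real.sqrt (1 - u^2)) = (2*R) * Real.sqrt (1 - u^2) from fun u => by ring]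
    rw [intervalIntegral.integral_const_mul, integral_sqrt_one_sub_sq, smul_eq_mul]
    ring


lemma K_eval (R : ℝ) (hR : 0 ≤ R) :
    ∫ x in (-R)..R, dawson (2 * Real.sqrt (R^2 - x^2))
      = π * (1 - Real.exp (-(4 * R^2))) / 4 := by
  have hcongr : ∀ x ∈ Set.uIcc (-R) R,
      dawson (2 * Real.sqrt (R^2 - x^2))
        = Real.exp (-(4 * R^2)) *
            ∫ u in (-(Real.sqrt (R^2 - x^2)))..(Real.sqrt (R^2 - x^2)),
              Real.exp (4 * (x^2 + u^2)) := by
    intro x hx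
    have hx2 : x^2 ≤ R^2 := by
      rw [Set.uIcc_of_le (by linarith)] at hx
      obtain ⟨h1, h2⟩ := hx; nlinarith
    set s := Real.sqrt (R^2 - x^2) with hs
    have hs2 : s^2 = R^2 - x^2 := Real.sq_sqrt (by linarith)
    rw [dawson_two_eq]
    have hexp : Real.exp (-(2*s)^2) = Real.exp (-(4 * R^2)) * Real.exp (4 * x^2) := by
      rw [← Real.exp_add]
      congr 1
      rw [mul_pow]
      nlinarith [hs2]
    rw [hexp, mul_assoc]
    congr 1
    rw [← intervalIntegral.integral_const_mul]
    apply intervalIntegral.integral_congr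
    intro u _
    dsimp only
    rw [← Real.exp_add]
    congr 1
    ring
  rw [intervalIntegral.integral_congr hcongr, intervalIntegral.integral_const_mul]
  have hfub : (∫ x in (-R)..R,
      ∫ u in (-(Real.sqrt (R^2 - x^2)))..(Real.sqrt (R^2 - x^2)), Real.exp (4 * (x^2 + u^2)))
      = π * (Real.exp (4 * R^2) - 1) / 4 := by
    rw [← disc_radial R hR, disc_fubini R hR (fun p => Real.exp (4 * (p.1 ^ 2 + p.2 ^ 2)))
      (by continuity)]
  rw [hfub]
  have h1 : Real.exp (-(4 * R^2)) * Real.exp (4 * R^2) = 1 := by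
    rw [← Real.exp_add]; simp
  linear_combination (π / 4) * h1

theorem expected_number_origin_GinSE (R : ℝ) (hR : 0 ≤ R) :
    (1 / π) * ∫ p in {p : ℝ × ℝ | p.1 ^ 2 + p.2 ^ 2 ≤ R ^ 2}, 4 * p.2 * dawson (2 * p.2)
      = R ^ 2 - 1 / 4 + (1 / 4) * Real.exp (-4 * R ^ 2) := by
  rw [disc_fubini R hR (fun p => 4 * p.2 * dawson (2 * p.2))
    ((continuous_const.mul continuous_snd).mul
      (continuous_dawson.comp (continuous_const.mul continuous_snd)))]
  have hinner : ∀ x ∈ Set.uIcc (-R) R,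
      (∫ y in (-(Real.sqrt (R^2 - x^2)))..(Real.sqrt (R^2 - x^2)),
          (fun p : ℝ × ℝ => 4 * p.2 * dawson (2 * p.2)) (x, y))
        = 2 * (Real.sqrt (R^2 - x^2)) - dawson (2 * (Real.sqrt (R^2 - x^2))) :=
    fun x _ => inner_eval (Real.sqrt (R^2 - x^2))
  rw [intervalIntegral.integral_congr hinner]
  have hi1 : IntervalIntegrable (fun x : ℝ => 2 * Real.sqrt (R^2 - x^2)) volume (-R) R :=
    Continuous.intervalIntegrable (by continuity) _ _
  have hi2 : IntervalIntegrable (fun x : ℝ => dawson (2 * Real.sqrt (R^2 - x^2))) volume (-R) R :=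
    Continuous.intervalIntegrable (by exact continuous_dawson.comp (by continuity)) _ _
  rw [intervalIntegral.integral_sub hi1 hi2]
  rw [area_lemma R hR, K_eval R hR]
  have hπ : π ≠ 0 := Real.pi_ne_zero
  rw [show (-4 : ℝ) * R ^ 2 = -(4 * R ^ 2) by ring]
  field_simp
  ring
end
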